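/- arXiv:1911.06078 — 9 statements merged into one kernel-verified Lean document; each statement's English description precedes it below -/
import Mathlib

section
/- There exist constants c > 0 and C > 0 such that for all real numbers ξ₁, ξ₂, ξ₃, setting ξ = ξ₁ − ξ₂ + ξ₃ and M = max{|ξ|, |ξ₁|, |ξ₂|, |ξ₃|}, one has c · M² · |ξ − ξ₁| · |ξ − ξ₃| ≤ |Φ₄(ξ, ξ₁, ξ₂, ξ₃)| ≤ C · M² · |ξ − ξ₁| · |ξ − ξ₃|. -/
/-- Two-sided bound `|Φ₄| ∼ max{|ξ|,|ξ₁|,|ξ₂|,|ξ₃|}² |ξ−ξ₁| |ξ−ξ₃|` under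
`ξ = ξ₁ − ξ₂ + ξ₃`. -/
theorem phi4_comparable :
    ∃ c C : ℝ, 0 < c ∧ 0 < C ∧
      ∀ ξ₁ ξ₂ ξ₃ ξ M : ℝ, ξ = ξ₁ - ξ₂ + ξ₃ →
        M = max (max |ξ| |ξ₁|) (max |ξ₂| |ξ₃|) →
        c * M ^ 2 * |ξ - ξ₁| * |ξ - ξ₃| ≤ |ξ ^ 4 - ξ₁ ^ 4 + ξ₂ ^ 4 - ξ₃ ^ 4| ∧
        |ξ ^ 4 - ξ₁ ^ 4 + ξ₂ ^ 4 - ξ₃ ^ 4| ≤ C * M ^ 2 * |ξ - ξ₁| * |ξ - ξ₃| := by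
  refine ⟨1, 20, one_pos, by norm_num, ?_⟩
  intro ξ₁ ξ₂ ξ₃ ξ M hξ hM
  set Q : ℝ := ξ ^ 2 + ξ₁ ^ 2 + ξ₂ ^ 2 + ξ₃ ^ 2 + 2 * (ξ₁ + ξ₃) ^ 2 with hQ
  have hfac : ξ ^ 4 - ξ₁ ^ 4 + ξ₂ ^ 4 - ξ₃ ^ 4 = (ξ - ξ₁) * (ξ - ξ₃) * Q := by
    subst hξ; rw [hQ]; ring
  have hQ0 : 0 ≤ Q := by positivity
  have habs : |ξ ^ 4 - ξ₁ ^ 4 + ξ₂ ^ 4 - ξ₃ ^ 4| = |ξ - ξ₁| * |ξ - ξ₃| * Q := by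
    rw [hfac, abs_mul, abs_mul, abs_of_nonneg hQ0]
  -- bounds on M^2
  have hMabs : M = |ξ| ∨ M = |ξ₁| ∨ M = |ξ₂| ∨ M = |ξ₃| := by
    rcases max_choice (max |ξ| |ξ₁|) (max |ξ₂| |ξ₃|) with h | h <;>
      rw [hM, h]
    · rcases max_choice |ξ| |ξ₁| with h' | h' <;> rw [h'] <;> tauto
    · rcases max_choice |ξ₂| |ξ₃| with h' | h' <;> rw [h'] <;> tauto
  have hMlow : M ^ 2 ≤ Q := by
    rcases hMabs with h | h | h | h <;> rw [h, sq_abs, hQ] <;> nlinarith [sq_nonneg (ξ₁ + ξ₃)]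
  have h1 : |ξ| ≤ M := hM ▸ le_trans (le_max_left _ _) (le_max_left _ _)
  have h2 : |ξ₁| ≤ M := hM ▸ le_trans (le_max_right _ _) (le_max_left _ _)
  have h3 : |ξ₂| ≤ M := hM ▸ le_trans (le_max_left _ _) (le_max_right _ _)
  have h4 : |ξ₃| ≤ M := hM ▸ le_trans (le_max_right _ _) (le_max_right _ _)
  have s1 : ξ ^ 2 ≤ M ^ 2 := by nlinarith [abs_nonneg ξ, sq_abs ξ]
  have s2 : ξ₁ ^ 2 ≤ M ^ 2 := by nlinarith [abs_nonneg ξ₁, sq_abs ξ₁]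
  have s3 : ξ₂ ^ 2 ≤ M ^ 2 := by nlinarith [abs_nonneg ξ₂, sq_abs ξ₂]
  have s4 : ξ₃ ^ 2 ≤ M ^ 2 := by nlinarith [abs_nonneg ξ₃, sq_abs ξ₃]
  have hMhigh : Q ≤ 20 * M ^ 2 := by
    rw [hQ]; nlinarith [sq_nonneg (ξ₁ - ξ₃)]
  have hab : 0 ≤ |ξ - ξ₁| * |ξ - ξ₃| := mul_nonneg (abs_nonneg _) (abs_nonneg _)
  constructor
  · rw [habs]
    calc 1 * M ^ 2 * |ξ - ξ₁| * |ξ - ξ₃| = |ξ - ξ₁| * |ξ - ξ₃| * M ^ 2 := by ring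
      _ ≤ |ξ - ξ₁| * |ξ - ξ₃| * Q := mul_le_mul_of_nonneg_left hMlow hab
  · rw [habs]
    calc |ξ - ξ₁| * |ξ - ξ₃| * Q ≤ |ξ - ξ₁| * |ξ - ξ₃| * (20 * M ^ 2) :=
        mul_le_mul_of_nonneg_left hMhigh hab
      _ = 20 * M ^ 2 * |ξ - ξ₁| * |ξ - ξ₃| := by ring
end

section
/- There exists a constant c > 0 such that for all real numbers ξ₁, ξ₂, ξ₃, setting ξ = ξ₁ − ξ₂ + ξ₃, one has |Φ₄(ξ, ξ₁, ξ₂, ξ₃)| ≥ c · |Φ₂(ξ, ξ₁, ξ₂, ξ₃)|². -/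
/-- `|Φ₄| ≳ |Φ₂|²` under `ξ = ξ₁ − ξ₂ + ξ₃`. -/
theorem phi4_ge_phi2_sq :
    ∃ c : ℝ, 0 < c ∧
      ∀ ξ₁ ξ₂ ξ₃ ξ : ℝ, ξ = ξ₁ - ξ₂ + ξ₃ →
        c * |ξ ^ 2 - ξ₁ ^ 2 + ξ₂ ^ 2 - ξ₃ ^ 2| ^ 2 ≤ |ξ ^ 4 - ξ₁ ^ 4 + ξ₂ ^ 4 - ξ₃ ^ 4| := by
  refine ⟨1/2, by norm_num, ?_⟩
  intro ξ₁ ξ₂ ξ₃ ξ h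
  subst h
  rw [sq_abs]
  rcases abs_cases ((ξ₁ - ξ₂ + ξ₃) ^ 4 - ξ₁ ^ 4 + ξ₂ ^ 4 - ξ₃ ^ 4) with ⟨he, _⟩ | ⟨he, _⟩ <;>
    rw [he] <;>
    nlinarith [sq_nonneg ((ξ₁ - ξ₂) * (ξ₃ - ξ₂)), sq_nonneg ((ξ₁ - ξ₂) + (ξ₃ - ξ₂)),
      sq_nonneg ((ξ₁ - ξ₂) - (ξ₃ - ξ₂)),
      sq_nonneg ((ξ₁ - ξ₂) * (ξ₃ - ξ₂) * (2 * ξ₂ + ξ₁ - ξ₂ + ξ₃ - ξ₂)),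
      mul_self_nonneg ((ξ₁ - ξ₂) * (ξ₃ - ξ₂) + 1),
      sq_nonneg ((ξ₁ - ξ₂)^2 - (ξ₃ - ξ₂)^2),
      sq_nonneg ((ξ₁ - ξ₂) * (ξ₃ - ξ₂) * ((ξ₁ - ξ₂) + (ξ₃ - ξ₂))),
      sq_nonneg (ξ₂ + (ξ₁ - ξ₂ + ξ₃ - ξ₂)/2)]
end

section
/- For every integer k ≥ 1 and all real numbers ξ₁, ξ₂, ξ₃, setting ξ = ξ₁ − ξ₂ + ξ₃, one has the factorization Φ_{2k}(ξ, ξ₁, ξ₂, ξ₃) = (ξ₁ − ξ₂)(ξ₃ − ξ₂) · P_k(ξ₁, ξ₂, ξ₃), where P_k is the explicit polynomial given in the context. -/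
open Finset in
/-- The explicit polynomial `P_k` from the factorization of the phase factor `Φ_{2k}`. -/
noncomputable def phasePoly (k : ℕ) (ξ₁ ξ₂ ξ₃ : ℝ) : ℝ :=
  (∑ m ∈ Finset.Icc 1 (2 * k - 2),
      ξ₃ ^ m * ∑ q ∈ Finset.range (2 * k - 2 - m + 1), ξ₁ ^ q * ξ₂ ^ (2 * k - 2 - m - q)) +
    (∑ q ∈ Finset.range (2 * k - 2 + 1), ξ₁ ^ q * ξ₂ ^ (2 * k - 2 - q)) +
    ∑ m ∈ Finset.Icc 1 (2 * k - 1),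
      ξ₁ ^ (2 * k - 1 - m) *
        ∑ p ∈ Finset.range m, (m.choose p : ℝ) * (ξ₁ - ξ₂) ^ (m - p - 1) * ξ₃ ^ p

open Finset in
/-- Binomial identity: `(∑_{p<m} C(m,p) a^{m-p-1} c^p) * a = (a+c)^m - c^m`. -/
lemma binom_diff_aux (a c : ℝ) (m : ℕ) :
    (∑ p ∈ range m, (m.choose p : ℝ) * a ^ (m - p - 1) * c ^ p) * a
      = (a + c) ^ m - c ^ m := by
  have h := add_pow c a m
  rw [Finset.sum_range_succ] at h
  simp only [Nat.sub_self, pow_zero, Nat.choose_self, Nat.cast_one, mul_one] at h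
  have : (a + c) ^ m - c ^ m = ∑ p ∈ range m, c ^ p * a ^ (m - p) * (m.choose p : ℝ) := by
    rw [add_comm a c, h]; ring
  rw [this, Finset.sum_mul]
  refine Finset.sum_congr rfl fun p hp => ?_
  have hpm : p < m := Finset.mem_range.mp hp
  have : a ^ (m - p) = a ^ (m - p - 1) * a := by
    rw [← pow_succ]; congr 1; omega
  rw [this]; ring

open Finset in
/-- Key identity: `(ξ₁ - ξ₂) * P_k = ∑_{m < 2k} (ξ^m ξ₁^{2k-1-m} - ξ₃^m ξ₂^{2k-1-m})`. -/
lemma phasePoly_mul (k : ℕ) (hk : 1 ≤ k) (ξ₁ ξ₂ ξ₃ : ℝ) :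
    phasePoly k ξ₁ ξ₂ ξ₃ * (ξ₁ - ξ₂)
      = ∑ m ∈ range (2 * k),
          ((ξ₁ - ξ₂ + ξ₃) ^ m * ξ₁ ^ (2 * k - 1 - m) - ξ₃ ^ m * ξ₂ ^ (2 * k - 1 - m)) := by
  set n := 2 * k with hn
  have hn2 : 2 ≤ n := by omega
  set a := ξ₁ - ξ₂ with ha
  -- first part: a * (A + A0) = ∑_{m < n} ξ₃^m (ξ₁^{n-1-m} - ξ₂^{n-1-m})
  have hA : ((∑ m ∈ Finset.Icc 1 (n - 2),
        ξ₃ ^ m * ∑ q ∈ range (n - 2 - m + 1), ξ₁ ^ q * ξ₂ ^ (n - 2 - m - q)) +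
        ∑ q ∈ range (n - 2 + 1), ξ₁ ^ q * ξ₂ ^ (n - 2 - q)) * a
      = ∑ m ∈ range n, ξ₃ ^ m * (ξ₁ ^ (n - 1 - m) - ξ₂ ^ (n - 1 - m)) := by
    have hr : range n = insert 0 (insert (n - 1) (Finset.Icc 1 (n - 2))) := by
      ext x
      simp only [mem_range, mem_insert, Finset.mem_Icc]
      omega
    rw [hr, Finset.sum_insert (by simp only [mem_insert, Finset.mem_Icc]; omega),
      Finset.sum_insert (by simp only [Finset.mem_Icc]; omega)]
    have h0 : ξ₃ ^ 0 * (ξ₁ ^ (n - 1 - 0) - ξ₂ ^ (n - 1 - 0))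
        = (∑ q ∈ range (n - 2 + 1), ξ₁ ^ q * ξ₂ ^ (n - 2 - q)) * a := by
      have e1 : n - 2 + 1 = n - 1 := by omega
      have e2 : ∀ q : ℕ, n - 2 - q = n - 1 - 1 - q := fun q => by omega
      rw [e1]
      simp_rw [e2]
      rw [ha, geom_sum₂_mul ξ₁ ξ₂ (n - 1)]
      simp
    have htop : ξ₃ ^ (n - 1) * (ξ₁ ^ (n - 1 - (n - 1)) - ξ₂ ^ (n - 1 - (n - 1))) = 0 := by
      simp
    have hmid : ∀ m ∈ Finset.Icc 1 (n - 2),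
        ξ₃ ^ m * (∑ q ∈ range (n - 2 - m + 1), ξ₁ ^ q * ξ₂ ^ (n - 2 - m - q)) * a
          = ξ₃ ^ m * (ξ₁ ^ (n - 1 - m) - ξ₂ ^ (n - 1 - m)) := by
      intro m hm
      rw [Finset.mem_Icc] at hm
      have e1 : n - 2 - m + 1 = n - 1 - m := by omega
      have e2 : ∀ q : ℕ, n - 2 - m - q = n - 1 - m - 1 - q := fun q => by omega
      rw [e1]
      simp_rw [e2]
      rw [mul_assoc, ha, geom_sum₂_mul ξ₁ ξ₂ (n - 1 - m)]
    rw [add_mul, Finset.sum_mul, Finset.sum_congr rfl hmid, h0, htop]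
    ring
  -- second part: a * B = ∑_{m < n} ξ₁^{n-1-m} (ξ^m - ξ₃^m)
  have hB : (∑ m ∈ Finset.Icc 1 (n - 1),
        ξ₁ ^ (n - 1 - m) * ∑ p ∈ range m, (m.choose p : ℝ) * a ^ (m - p - 1) * ξ₃ ^ p) * a
      = ∑ m ∈ range n, ξ₁ ^ (n - 1 - m) * ((a + ξ₃) ^ m - ξ₃ ^ m) := by
    have hr : range n = insert 0 (Finset.Icc 1 (n - 1)) := by
      ext x
      simp only [mem_range, mem_insert, Finset.mem_Icc]
      omega
    rw [hr, Finset.sum_insert (by simp only [Finset.mem_Icc]; omega)]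
    have h0 : ξ₁ ^ (n - 1 - 0) * ((a + ξ₃) ^ 0 - ξ₃ ^ 0) = 0 := by simp
    rw [h0, zero_add, Finset.sum_mul]
    refine Finset.sum_congr rfl fun m hm => ?_
    rw [mul_assoc, binom_diff_aux a ξ₃ m]
  -- combine
  unfold phasePoly
  rw [← hn, ← ha, add_mul, hA, hB, ← Finset.sum_add_distrib]
  refine Finset.sum_congr rfl fun m hm => ?_
  have : ξ₁ - ξ₂ + ξ₃ = a + ξ₃ := by rw [ha]
  rw [this]
  ring

/-- Factorization `Φ_{2k}(ξ, ξ₁, ξ₂, ξ₃) = (ξ₁ − ξ₂)(ξ₃ − ξ₂) P_k(ξ₁, ξ₂, ξ₃)` under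
`ξ = ξ₁ − ξ₂ + ξ₃`. -/
theorem phi2k_factorization (k : ℕ) (hk : 1 ≤ k) (ξ₁ ξ₂ ξ₃ ξ : ℝ)
    (hξ : ξ = ξ₁ - ξ₂ + ξ₃) :
    ξ ^ (2 * k) - ξ₁ ^ (2 * k) + ξ₂ ^ (2 * k) - ξ₃ ^ (2 * k) =
      (ξ₁ - ξ₂) * (ξ₃ - ξ₂) * phasePoly k ξ₁ ξ₂ ξ₃ := by
  subst hξ
  have key := phasePoly_mul k hk ξ₁ ξ₂ ξ₃
  have h1 := geom_sum₂_mul (ξ₁ - ξ₂ + ξ₃) ξ₁ (2 * k)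
  have h2 := geom_sum₂_mul ξ₃ ξ₂ (2 * k)
  have hdiff : (ξ₁ - ξ₂ + ξ₃) ^ (2 * k) - ξ₁ ^ (2 * k) + ξ₂ ^ (2 * k) - ξ₃ ^ (2 * k)
      = ((∑ m ∈ Finset.range (2 * k),
          ((ξ₁ - ξ₂ + ξ₃) ^ m * ξ₁ ^ (2 * k - 1 - m) - ξ₃ ^ m * ξ₂ ^ (2 * k - 1 - m))))
        * (ξ₃ - ξ₂) := by
    rw [Finset.sum_sub_distrib, sub_mul, h2]
    have : (∑ m ∈ Finset.range (2 * k),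
        (ξ₁ - ξ₂ + ξ₃) ^ m * ξ₁ ^ (2 * k - 1 - m)) * (ξ₃ - ξ₂)
        = (∑ m ∈ Finset.range (2 * k),
        (ξ₁ - ξ₂ + ξ₃) ^ m * ξ₁ ^ (2 * k - 1 - m)) * ((ξ₁ - ξ₂ + ξ₃) - ξ₁) := by ring
    rw [this, h1]
    ring
  rw [hdiff, ← key]
  ring
end

section
/- For every integer k ≥ 2 and all real numbers ξ₁, ξ₂, ξ₃ with (ξ₁, ξ₂, ξ₃) ≠ (0, 0, 0), one has P_k(ξ₁, ξ₂, ξ₃) > 0; that is, P_k is nonnegative on ℝ³ and has only the trivial root. -/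
open Finset

lemma aux_binom (w t : ℝ) : ∀ m : ℕ,
    ∑ p ∈ range m, (m.choose p : ℝ) * w ^ (m - p - 1) * t ^ p
      = ∑ q ∈ range m, (w + t) ^ q * t ^ (m - 1 - q) := by
  intro m
  induction m with
  | zero => simp
  | succ m ih =>
    have hb : (t + w) ^ m
        = ∑ p ∈ range m, t ^ (p+1) * w ^ (m - (p+1)) * ((m.choose (p+1) : ℕ) : ℝ)
          + t ^ 0 * w ^ (m - 0) * ((m.choose 0 : ℕ) : ℝ) := by
      have hb0 := add_pow t w m
      rw [Finset.sum_range_succ'] at hb0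
      exact hb0
    have hL : ∑ p ∈ range (m+1), ((m+1).choose p : ℝ) * w ^ (m+1-p-1) * t ^ p
        = t * (∑ p ∈ range m, (m.choose p : ℝ) * w ^ (m-p-1) * t ^ p) + (t + w) ^ m := by
      rw [Finset.sum_range_succ']
      have e1 : ∀ p ∈ range m, ((m+1).choose (p+1) : ℝ) * w ^ (m+1-(p+1)-1) * t ^ (p+1)
          = t * ((m.choose p : ℝ) * w ^ (m-p-1) * t ^ p)
            + t ^ (p+1) * w ^ (m-(p+1)) * ((m.choose (p+1) : ℕ) : ℝ) := by
        intro p hp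
        simp only [Finset.mem_range] at hp
        have h1 : m+1-(p+1)-1 = m-p-1 := by omega
        have h2 : m-(p+1) = m-p-1 := by omega
        rw [h1, h2, Nat.choose_succ_succ]
        push_cast
        ring
      rw [Finset.sum_congr rfl e1, Finset.sum_add_distrib, ← Finset.mul_sum, hb]
      simp
      ring
    have hR : ∑ q ∈ range (m+1), (w + t) ^ q * t ^ (m+1-1-q)
        = t * (∑ q ∈ range m, (w + t) ^ q * t ^ (m-1-q)) + (t + w) ^ m := by
      rw [Finset.sum_range_succ]
      have e1 : ∀ q ∈ range m, (w + t) ^ q * t ^ (m+1-1-q)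
          = t * ((w + t) ^ q * t ^ (m-1-q)) := by
        intro q hq
        simp only [Finset.mem_range] at hq
        have h1 : m+1-1-q = (m-1-q)+1 := by omega
        rw [h1, pow_succ]
        ring
      rw [Finset.sum_congr rfl e1, ← Finset.mul_sum]
      rw [add_comm w t]
      simp
    rw [hL, hR, ih]

noncomputable def Eaux (n : ℕ) (x y z : ℝ) : ℝ :=
  (∑ m ∈ range (n+1), z ^ m * ∑ q ∈ range (n+1-m), x ^ q * y ^ (n-m-q))
  + ∑ i ∈ range (n+1), x ^ (n-i) * ∑ q ∈ range (i+1), (x - y + z) ^ q * z ^ (i-q)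

lemma geom_fact (N : ℕ) (a b : ℝ) :
    (a - b) * ∑ q ∈ range N, a ^ q * b ^ (N-1-q) = a ^ N - b ^ N := by
  rw [mul_comm]; exact geom_sum₂_mul a b N

lemma Eaux_mul (n : ℕ) (x y z : ℝ) :
    (z - y) * ((x - y) * Eaux n x y z)
      = (x - y + z) ^ (n+2) + y ^ (n+2) - x ^ (n+2) - z ^ (n+2) := by
  set η := x - y + z with hη
  set S1 := ∑ i ∈ range (n+1), z ^ i * x ^ (n+1-i) with hS1
  set S2 := ∑ i ∈ range (n+1), z ^ i * y ^ (n+1-i) with hS2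
  set S3 := ∑ i ∈ range (n+1), x ^ (n-i) * η ^ (i+1) with hS3
  set S4 := ∑ i ∈ range (n+1), x ^ (n-i) * z ^ (i+1) with hS4
  have h1 : (x - y) * Eaux n x y z = S1 - S2 + (S3 - S4) := by
    unfold Eaux
    simp only [← hη]
    rw [mul_add, Finset.mul_sum, Finset.mul_sum]
    congr 1
    · rw [hS1, hS2, ← Finset.sum_sub_distrib]
      refine Finset.sum_congr rfl ?_
      intro m hm
      have hg := geom_fact (n+1-m) x y
      have e1 : ∀ q, n-m-q = (n+1-m)-1-q := by intro q; omega
      have e2 : ∑ q ∈ range (n+1-m), x ^ q * y ^ (n-m-q)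
          = ∑ q ∈ range (n+1-m), x ^ q * y ^ ((n+1-m)-1-q) := by
        refine Finset.sum_congr rfl ?_; intro q _; rw [e1 q]
      rw [mul_comm (x - y), mul_assoc, e2, mul_comm _ (x-y), hg]
      ring
    · rw [hS3, hS4, ← Finset.sum_sub_distrib]
      refine Finset.sum_congr rfl ?_
      intro i hi
      have hg := geom_fact (i+1) η z
      have e2 : ∑ q ∈ range (i+1), η ^ q * z ^ (i-q)
          = ∑ q ∈ range (i+1), η ^ q * z ^ ((i+1)-1-q) := by
        refine Finset.sum_congr rfl ?_; intro q _; norm_num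
      have hxy : x - y = η - z := by rw [hη]; ring
      rw [hxy, mul_comm (η - z), mul_assoc, e2, mul_comm _ (η - z), hg]
      ring
  have h2 : S1 - S4 = x ^ (n+1) - z ^ (n+1) := by
    have ht := Finset.sum_range_sub' (fun i => z ^ i * x ^ (n+1-i)) (n+1)
    rw [hS1, hS4, ← Finset.sum_sub_distrib]
    have e : ∀ i ∈ range (n+1), z ^ i * x ^ (n+1-i) - x ^ (n-i) * z ^ (i+1)
        = (fun i => z ^ i * x ^ (n+1-i)) i - (fun i => z ^ i * x ^ (n+1-i)) (i+1) := by
      intro i hi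
      simp only
      have e1 : n+1-(i+1) = n-i := by omega
      rw [e1]; ring
    rw [Finset.sum_congr rfl e, ht]
    norm_num
  have h3 : (z - y) * (S2 + z ^ (n+1)) = z ^ (n+2) - y ^ (n+2) := by
    have hg := geom_fact (n+2) z y
    rw [Finset.sum_range_succ] at hg
    have e1 : n+2-1-(n+1) = 0 := by omega
    rw [e1] at hg
    have e2 : ∑ q ∈ range (n+1), z ^ q * y ^ (n+2-1-q) = S2 := by
      rw [hS2]
      refine Finset.sum_congr rfl ?_
      intro q hq
      simp only [Finset.mem_range] at hq
      have e3 : n+2-1-q = n+1-q := by omega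
      rw [e3]
    rw [e2] at hg
    simpa using hg
  have h4 : (z - y) * (S3 + x ^ (n+1)) = η ^ (n+2) - x ^ (n+2) := by
    have hg := geom_fact (n+2) η x
    rw [Finset.sum_range_succ'] at hg
    have e2 : ∑ i ∈ range (n+1), η ^ (i+1) * x ^ (n+2-1-(i+1)) = S3 := by
      rw [hS3]
      refine Finset.sum_congr rfl ?_
      intro i hi
      have e3 : n+2-1-(i+1) = n-i := by omega
      rw [e3]; ring
    rw [e2] at hg
    have e4 : n+2-1-0 = n+1 := by omega
    rw [e4] at hg
    have hzy : z - y = η - x := by rw [hη]; ring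
    rw [hzy]
    simpa using hg
  linear_combination (z - y) * h1 + (z - y) * h2 + (-1 : ℝ) * h3 + h4

lemma tri1 (f : ℕ → ℝ) : ∀ N : ℕ,
    ∑ m ∈ range N, ∑ q ∈ range (N - m), f q
      = ∑ q ∈ range N, ((N - q : ℕ) : ℝ) * f q := by
  intro N
  induction N with
  | zero => simp
  | succ N ih =>
    rw [Finset.sum_range_succ' (fun m => ∑ q ∈ range (N + 1 - m), f q) N]
    have e1 : ∀ m ∈ range N, ∑ q ∈ range (N + 1 - (m+1)), f q
        = ∑ q ∈ range (N - m), f q := by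
      intro m hm
      have : N + 1 - (m+1) = N - m := by omega
      rw [this]
    rw [Finset.sum_congr rfl e1, ih]
    rw [Finset.sum_range_succ (fun q => ((N + 1 - q : ℕ) : ℝ) * f q) N]
    have e2 : ∀ q ∈ range N, ((N + 1 - q : ℕ) : ℝ) * f q
        = ((N - q : ℕ) : ℝ) * f q + f q := by
      intro q hq
      simp only [Finset.mem_range] at hq
      have : N + 1 - q = (N - q) + 1 := by omega
      rw [this]
      push_cast
      ring
    rw [Finset.sum_congr rfl e2, Finset.sum_add_distrib]
    have e3 : N + 1 - N = 1 := by omega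
    rw [e3, Nat.sub_zero]
    rw [Finset.sum_range_succ f N]
    push_cast
    ring

lemma tri2 (f : ℕ → ℝ) : ∀ N : ℕ,
    ∑ i ∈ range N, ∑ q ∈ range (i + 1), f q
      = ∑ q ∈ range N, ((N - q : ℕ) : ℝ) * f q := by
  intro N
  induction N with
  | zero => simp
  | succ N ih =>
    rw [Finset.sum_range_succ (fun i => ∑ q ∈ range (i + 1), f q) N, ih]
    rw [Finset.sum_range_succ (fun q => ((N + 1 - q : ℕ) : ℝ) * f q) N]
    have e2 : ∀ q ∈ range N, ((N + 1 - q : ℕ) : ℝ) * f q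
        = ((N - q : ℕ) : ℝ) * f q + f q := by
      intro q hq
      simp only [Finset.mem_range] at hq
      have : N + 1 - q = (N - q) + 1 := by omega
      rw [this]
      push_cast
      ring
    rw [Finset.sum_congr rfl e2, Finset.sum_add_distrib]
    have e3 : N + 1 - N = 1 := by omega
    rw [e3]
    rw [Finset.sum_range_succ f N]
    push_cast
    ring

lemma Eaux_bd_x (n : ℕ) (y z : ℝ) :
    Eaux n y y z = ((n : ℝ) + 2) * ∑ m ∈ range (n+1), z ^ m * y ^ (n-m) := by
  unfold Eaux
  have e0 : y - y + z = z := by ring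
  rw [e0]
  have h1 : ∀ m ∈ range (n+1), z ^ m * ∑ q ∈ range (n+1-m), y ^ q * y ^ (n-m-q)
      = ((n+1-m : ℕ) : ℝ) * (z ^ m * y ^ (n-m)) := by
    intro m hm
    simp only [Finset.mem_range] at hm
    have e1 : ∀ q ∈ range (n+1-m), y ^ q * y ^ (n-m-q) = y ^ (n-m) := by
      intro q hq
      simp only [Finset.mem_range] at hq
      rw [← pow_add]
      congr 1
      omega
    rw [Finset.sum_congr rfl e1, Finset.sum_const, nsmul_eq_mul]
    simp only [Finset.card_range]
    ring
  have h2 : ∀ i ∈ range (n+1), y ^ (n-i) * ∑ q ∈ range (i+1), z ^ q * z ^ (i-q)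
      = ((i+1 : ℕ) : ℝ) * (z ^ i * y ^ (n-i)) := by
    intro i hi
    simp only [Finset.mem_range] at hi
    have e1 : ∀ q ∈ range (i+1), z ^ q * z ^ (i-q) = z ^ i := by
      intro q hq
      simp only [Finset.mem_range] at hq
      rw [← pow_add]
      congr 1
      omega
    rw [Finset.sum_congr rfl e1, Finset.sum_const, nsmul_eq_mul]
    simp only [Finset.card_range]
    ring
  rw [Finset.sum_congr rfl h1, Finset.sum_congr rfl h2, ← Finset.sum_add_distrib,
    Finset.mul_sum]
  refine Finset.sum_congr rfl ?_
  intro m hm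
  simp only [Finset.mem_range] at hm
  have e2 : ((n+1-m : ℕ) : ℝ) = (n : ℝ) + 1 - m := by
    have : m ≤ n + 1 := by omega
    push_cast [Nat.cast_sub this]
    ring
  rw [e2]
  push_cast
  ring

lemma Eaux_bd_z (n : ℕ) (x y : ℝ) :
    Eaux n x y y = ((n : ℝ) + 2) * ∑ q ∈ range (n+1), x ^ q * y ^ (n-q) := by
  unfold Eaux
  have e0 : x - y + y = x := by ring
  rw [e0]
  have h1 : ∀ m ∈ range (n+1), y ^ m * ∑ q ∈ range (n+1-m), x ^ q * y ^ (n-m-q)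
      = ∑ q ∈ range (n+1-m), x ^ q * y ^ (n-q) := by
    intro m hm
    simp only [Finset.mem_range] at hm
    rw [Finset.mul_sum]
    refine Finset.sum_congr rfl ?_
    intro q hq
    simp only [Finset.mem_range] at hq
    have : y ^ m * (x ^ q * y ^ (n-m-q)) = x ^ q * (y ^ m * y ^ (n-m-q)) := by ring
    rw [this, ← pow_add]
    congr 2
    omega
  have h2 : ∀ i ∈ range (n+1), x ^ (n-i) * ∑ q ∈ range (i+1), x ^ q * y ^ (i-q)
      = ∑ q ∈ range (i+1), x ^ (n-q) * y ^ q := by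
    intro i hi
    simp only [Finset.mem_range] at hi
    rw [Finset.mul_sum]
    have h3 : ∀ q ∈ range (i+1), x ^ (n-i) * (x ^ q * y ^ (i-q))
        = (fun r => x ^ (n-r) * y ^ r) (i - q) := by
      intro q hq
      simp only [Finset.mem_range] at hq
      simp only
      have e5 : x ^ (n-i) * (x ^ q * y ^ (i-q)) = (x ^ (n-i) * x ^ q) * y ^ (i-q) := by ring
      rw [e5, ← pow_add]
      have : n - i + q = n - (i - q) := by omega
      rw [this]
    rw [Finset.sum_congr rfl h3]
    have h4 := Finset.sum_range_reflect (fun r => x ^ (n-r) * y ^ r) (i+1)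
    have h5 : ∀ q ∈ range (i+1),
        (fun r => x ^ (n-r) * y ^ r) (i + 1 - 1 - q) = (fun r => x ^ (n-r) * y ^ r) (i - q) := by
      intro q hq
      simp only
      have : i + 1 - 1 - q = i - q := by omega
      rw [this]
    rw [Finset.sum_congr rfl h5] at h4
    exact h4
  rw [Finset.sum_congr rfl h1, Finset.sum_congr rfl h2]
  rw [tri1 (fun q => x ^ q * y ^ (n-q)) (n+1), tri2 (fun q => x ^ (n-q) * y ^ q) (n+1)]
  -- now: ∑ q, (n+1-q) * (x^q y^(n-q)) + ∑ q, (n+1-q) * (x^(n-q) y^q) = (n+2) ∑ x^q y^(n-q)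
  have h6 := Finset.sum_range_reflect (fun q => ((n + 1 - q : ℕ) : ℝ) * (x ^ (n-q) * y ^ q)) (n+1)
  have h7 : ∀ q ∈ range (n+1),
      (fun q => ((n + 1 - q : ℕ) : ℝ) * (x ^ (n-q) * y ^ q)) (n + 1 - 1 - q)
        = ((q + 1 : ℕ) : ℝ) * (x ^ q * y ^ (n-q)) := by
    intro q hq
    simp only [Finset.mem_range] at hq
    simp only
    have e1 : n + 1 - (n + 1 - 1 - q) = q + 1 := by omega
    have e2 : n - (n + 1 - 1 - q) = q := by omega
    have e3 : n + 1 - 1 - q = n - q := by omega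
    rw [e3] at e1 e2 ⊢
    rw [e1, e2]
  rw [Finset.sum_congr rfl h7] at h6
  rw [← h6, Finset.mul_sum, ← Finset.sum_add_distrib]
  refine Finset.sum_congr rfl ?_
  intro q hq
  simp only [Finset.mem_range] at hq
  have e2 : ((n+1-q : ℕ) : ℝ) = (n : ℝ) + 1 - q := by
    have : q ≤ n + 1 := by omega
    push_cast [Nat.cast_sub this]
    ring
  rw [e2]
  push_cast
  ring

lemma gmono (M : ℕ) (hM : Odd M) (v : ℝ) (hv : 0 < v) :
    StrictMono (fun s : ℝ => (s + v) ^ (M+1) - s ^ (M+1)) := by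
  apply strictMono_of_deriv_pos
  intro s
  have ha : HasDerivAt (fun s : ℝ => s + v) 1 s := (hasDerivAt_id s).add_const v
  have hb := ha.pow (M+1)
  have hc := hasDerivAt_pow (M+1) s
  have hd := hb.sub hc
  simp only [Nat.add_sub_cancel, mul_one] at hd
  rw [show (fun s : ℝ => (s + v) ^ (M+1) - s ^ (M+1)) = ((fun s => s + v) ^ (M + 1) - fun x => x ^ (M + 1)) from rfl, hd.deriv]
  have h2 : s ^ M < (s + v) ^ M := hM.strictMono_pow (by linarith : s < s + v)
  have h3 : (0:ℝ) < (M:ℝ)+1 := by positivity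
  push_cast
  nlinarith

lemma F_pos (M : ℕ) (hM : Odd M) (x y z : ℝ) (hx : x ≠ y) (hz : z ≠ y) :
    0 < ((z - y) * (x - y)) *
      ((x - y + z) ^ (M+1) + y ^ (M+1) - x ^ (M+1) - z ^ (M+1)) := by
  set v := z - y with hv
  have hgF : (x - y + z) ^ (M+1) + y ^ (M+1) - x ^ (M+1) - z ^ (M+1)
      = ((x + v) ^ (M+1) - x ^ (M+1)) - ((y + v) ^ (M+1) - y ^ (M+1)) := by
    have e1 : x + v = x - y + z := by rw [hv]; ring
    have e2 : y + v = z := by rw [hv]; ring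
    rw [e1, e2]; ring
  rw [hgF]
  have hvne : v ≠ 0 := by
    rw [hv]; intro hc; apply hz; linarith [sub_eq_zero.mp hc]
  rcases hvne.lt_or_gt with h1 | h1
  · -- v < 0 : the map s ↦ (s+v)^(M+1) - s^(M+1) is strictly anti
    have hm := gmono M hM (-v) (by linarith)
    have hanti : ∀ s1 s2 : ℝ, s1 < s2 →
        ((s2 + v) ^ (M+1) - s2 ^ (M+1)) < ((s1 + v) ^ (M+1) - s1 ^ (M+1)) := by
      intro s1 s2 hs
      have := hm (show s1 + v < s2 + v by linarith)
      simp only at this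
      have e1 : s1 + v + -v = s1 := by ring
      have e2 : s2 + v + -v = s2 := by ring
      rw [e1, e2] at this
      linarith
    rcases lt_or_gt_of_ne hx with h2 | h2
    · -- x < y : g x > g y, u < 0, v < 0 : c > 0, F > 0
      have hF := hanti x y h2
      have hc : 0 < v * (x - y) := mul_pos_of_neg_of_neg h1 (by linarith)
      exact mul_pos hc (by linarith)
    · -- y < x : g x < g y, F < 0 ; c < 0
      have hF := hanti y x h2
      have hc : v * (x - y) < 0 := mul_neg_of_neg_of_pos h1 (by linarith)
      exact mul_pos_of_neg_of_neg hc (by linarith)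
  · -- v > 0
    have hm := gmono M hM v h1
    rcases lt_or_gt_of_ne hx with h2 | h2
    · -- x < y : g x < g y : F < 0 ; c = v*(x-y) < 0
      have hF := hm h2
      simp only at hF
      have hc : v * (x - y) < 0 := mul_neg_of_pos_of_neg h1 (by linarith)
      exact mul_pos_of_neg_of_neg hc (by linarith)
    · have hF := hm h2
      simp only at hF
      have hc : 0 < v * (x - y) := mul_pos h1 (by linarith)
      exact mul_pos hc (by linarith)

lemma phasePoly_eq (k : ℕ) (hk : 2 ≤ k) (x y z : ℝ) :
    phasePoly k x y z = Eaux (2*k-2) x y z := by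
  set n := 2*k-2 with hn
  have h1 : 2*k-1 = n+1 := by omega
  unfold phasePoly Eaux
  rw [h1]
  congr 1
  · -- first two sums = first sum of Eaux
    rw [Finset.sum_range_succ' (fun m => z ^ m * ∑ q ∈ range (n+1-m), x ^ q * y ^ (n-m-q)) n]
    congr 1
    · -- Icc 1 n part
      have : Finset.Icc 1 n = Finset.Ico 1 (n+1) := by rw [Finset.Ico_add_one_right_eq_Icc]
      rw [this, Finset.sum_Ico_eq_sum_range]
      simp only [Nat.add_sub_cancel]
      refine Finset.sum_congr rfl ?_
      intro i hi
      simp only [Finset.mem_range] at hi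
      rw [add_comm 1 i]
      have h4 : 2*k-2-(i+1)+1 = n+1-(i+1) := by omega
      rw [h4]
    · simp [hn]
  · -- third sum
    have : Finset.Icc 1 (n+1) = Finset.Ico 1 (n+2) := (Finset.Ico_add_one_right_eq_Icc (a := 1) (b := n+1)).symm
    rw [this, Finset.sum_Ico_eq_sum_range]
    simp only [show n+2-1 = n+1 from rfl]
    refine Finset.sum_congr rfl ?_
    intro i hi
    simp only [Finset.mem_range] at hi
    rw [aux_binom]
    have h2 : n+1-(1+i) = n-i := by omega
    rw [h2, add_comm 1 i]
    congr 1

/-- For `k ≥ 2`, `P_k` is positive away from the origin. -/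
theorem phasePoly_pos (k : ℕ) (hk : 2 ≤ k) (ξ₁ ξ₂ ξ₃ : ℝ)
    (h : (ξ₁, ξ₂, ξ₃) ≠ (0, 0, 0)) :
    0 < phasePoly k ξ₁ ξ₂ ξ₃ := by
  set x := ξ₁; set y := ξ₂; set z := ξ₃
  set n := 2*k-2 with hn
  have hP := phasePoly_eq k hk x y z
  have hOdd : Odd (n+1) := ⟨k-1, by omega⟩
  have hEven : Even n := ⟨k-1, by omega⟩
  rw [hP]
  by_cases hx : x = y
  · by_cases hz : z = y
    · -- x = y = z
      rw [hx, hz, Eaux_bd_x n y y]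
      have hy : y ≠ 0 := by
        intro hy0
        apply h
        rw [Prod.mk.injEq, Prod.mk.injEq]
        refine ⟨by rw [hx, hy0], by rw [hy0], by rw [hz, hy0]⟩
      have e1 : ∀ m ∈ range (n+1), y ^ m * y ^ (n-m) = y ^ n := by
        intro m hm
        simp only [Finset.mem_range] at hm
        rw [← pow_add]
        congr 1
        omega
      rw [Finset.sum_congr rfl e1, Finset.sum_const, Finset.card_range, nsmul_eq_mul]
      have h1 : (0:ℝ) < y ^ n := hEven.pow_pos hy
      have h2 : (0:ℝ) < (n:ℝ) + 2 := by positivity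
      have h3 : (0:ℝ) < ((n+1 : ℕ) : ℝ) := by positivity
      exact mul_pos h2 (mul_pos h3 h1)
    · -- x = y, z ≠ y
      rw [hx, Eaux_bd_x n y z]
      have hg := geom_fact (n+1) z y
      have e1 : ∀ q ∈ range (n+1), z ^ q * y ^ (n+1-1-q) = z ^ q * y ^ (n-q) := by
        intro q hq
        have : n+1-1-q = n-q := by omega
        rw [this]
      rw [Finset.sum_congr rfl e1] at hg
      have hzy : z - y ≠ 0 := sub_ne_zero.mpr hz
      have hG : 0 < ∑ m ∈ range (n+1), z ^ m * y ^ (n-m) := by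
        have hGe : (∑ m ∈ range (n+1), z ^ m * y ^ (n-m))
            = (z ^ (n+1) - y ^ (n+1)) / (z - y) := by
          rw [eq_div_iff hzy]
          rw [mul_comm] at hg
          exact hg
        rw [hGe]
        rcases lt_or_gt_of_ne hz with h1 | h1
        · have := hOdd.strictMono_pow (R := ℝ) h1
          exact div_pos_of_neg_of_neg (by simpa using sub_neg.mpr this) (by linarith)
        · have := hOdd.strictMono_pow (R := ℝ) h1
          exact div_pos (by simpa using sub_pos.mpr this) (by linarith)
      have h2 : (0:ℝ) < (n:ℝ) + 2 := by positivity
      exact mul_pos h2 hG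
  · by_cases hz : z = y
    · -- z = y, x ≠ y
      rw [hz, Eaux_bd_z n x y]
      have hg := geom_fact (n+1) x y
      have e1 : ∀ q ∈ range (n+1), x ^ q * y ^ (n+1-1-q) = x ^ q * y ^ (n-q) := by
        intro q hq
        have : n+1-1-q = n-q := by omega
        rw [this]
      rw [Finset.sum_congr rfl e1] at hg
      have hxy : x - y ≠ 0 := sub_ne_zero.mpr hx
      have hG : 0 < ∑ q ∈ range (n+1), x ^ q * y ^ (n-q) := by
        have hGe : (∑ q ∈ range (n+1), x ^ q * y ^ (n-q))
            = (x ^ (n+1) - y ^ (n+1)) / (x - y) := by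
          rw [eq_div_iff hxy]
          rw [mul_comm] at hg
          exact hg
        rw [hGe]
        rcases lt_or_gt_of_ne hx with h1 | h1
        · have := hOdd.strictMono_pow (R := ℝ) h1
          exact div_pos_of_neg_of_neg (by simpa using sub_neg.mpr this) (by linarith)
        · have := hOdd.strictMono_pow (R := ℝ) h1
          exact div_pos (by simpa using sub_pos.mpr this) (by linarith)
      have h2 : (0:ℝ) < (n:ℝ) + 2 := by positivity
      exact mul_pos h2 hG
    · -- main case : x ≠ y, z ≠ y
      have hid := Eaux_mul n x y z
      have hFp := F_pos (n+1) hOdd x y z hx hz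
      have e1 : n + 1 + 1 = n + 2 := rfl
      rw [e1] at hFp
      have hcE : ((z-y)*(x-y))^2 * Eaux n x y z
          = ((z-y)*(x-y)) * ((x - y + z) ^ (n+2) + y ^ (n+2) - x ^ (n+2) - z ^ (n+2)) := by
        linear_combination ((z-y)*(x-y)) * hid
      have hpos : 0 < ((z-y)*(x-y))^2 * Eaux n x y z := by
        rw [hcE]
        exact hFp
      have hcne : (z-y)*(x-y) ≠ 0 :=
        mul_ne_zero (sub_ne_zero.mpr hz) (sub_ne_zero.mpr hx)
      have hsq : 0 < ((z-y)*(x-y))^2 :=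
        lt_of_le_of_ne (sq_nonneg _) (Ne.symm (pow_ne_zero 2 hcne))
      rcases mul_pos_iff.mp hpos with ⟨_, hE⟩ | ⟨hneg, _⟩
      · exact hE
      · linarith
end

section
/- For every integer k ≥ 1 there exist constants c > 0 and C > 0 such that for all real numbers ξ₁, ξ₂, ξ₃, setting ξ = ξ₁ − ξ₂ + ξ₃ and M = max{|ξ|, |ξ₁|, |ξ₂|, |ξ₃|}, one has c · M^{2k−2} · |ξ − ξ₁| · |ξ − ξ₃| ≤ |Φ_{2k}(ξ, ξ₁, ξ₂, ξ₃)| ≤ C · M^{2k−2} · |ξ − ξ₁| · |ξ − ξ₃|. -/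
open Finset

/-- `Sg n x y = ∑_{i<n} x^i y^(n-1-i)`, so that `Sg n x y * (x - y) = x^n - y^n`. -/
noncomputable def Sg (n : ℕ) (x y : ℝ) : ℝ := ∑ i ∈ Finset.range n, x ^ i * y ^ (n - 1 - i)

lemma Sg_mul (n : ℕ) (x y : ℝ) : Sg n x y * (x - y) = x ^ n - y ^ n :=
  geom_sum₂_mul x y n

lemma Sg_diag (n : ℕ) (x : ℝ) : Sg n x x = n * x ^ (n - 1) := by
  unfold Sg
  rw [Finset.sum_congr rfl (fun i hi => ?_), Finset.sum_const, Finset.card_range,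
    nsmul_eq_mul]
  rw [← pow_add]
  congr 1
  have := Finset.mem_range.mp hi
  omega

lemma Sg_hom (n : ℕ) (t x y : ℝ) : t * Sg n (t * x) (t * y) = t ^ n * Sg n x y := by
  unfold Sg
  rw [Finset.mul_sum, Finset.mul_sum]
  refine Finset.sum_congr rfl fun i hi => ?_
  have hi' := Finset.mem_range.mp hi
  have ht : t ^ n = t ^ i * t ^ (n - 1 - i) * t := by
    rw [← pow_add, ← pow_succ]
    congr 1
    omega
  rw [ht, mul_pow, mul_pow]
  ring

lemma Sg_cont {X : Type*} [TopologicalSpace X] (n : ℕ) {f g : X → ℝ}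
    (hf : Continuous f) (hg : Continuous g) :
    Continuous fun t => Sg n (f t) (g t) := by
  unfold Sg
  exact continuous_finset_sum _ fun i _ => (hf.pow _).mul (hg.pow _)

/-- The homogeneous factor `R` with `Φ = (x - x₁)(x - x₃) R`. -/
noncomputable def Rp (k : ℕ) (x x1 x2 x3 : ℝ) : ℝ :=
  ∑ i ∈ Finset.range (2 * k),
    (Sg i x x3 * x1 ^ (2 * k - 1 - i) + x3 ^ i * Sg (2 * k - 1 - i) x1 x2)

lemma Rp_cont {X : Type*} [TopologicalSpace X] (k : ℕ) {f1 f2 f3 f4 : X → ℝ}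
    (h1 : Continuous f1) (h2 : Continuous f2) (h3 : Continuous f3) (h4 : Continuous f4) :
    Continuous fun t => Rp k (f1 t) (f2 t) (f3 t) (f4 t) := by
  unfold Rp
  exact continuous_finset_sum _ fun i _ =>
    ((Sg_cont i h1 h4).mul (h2.pow _)).add ((h4.pow _).mul (Sg_cont _ h2 h3))

lemma key_ident (k : ℕ) (x x1 x2 x3 : ℝ) (hx : x = x1 - x2 + x3) :
    x ^ (2 * k) - x1 ^ (2 * k) + x2 ^ (2 * k) - x3 ^ (2 * k)
      = (x - x1) * ((x - x3) * Rp k x x1 x2 x3) := by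
  have h1 : Sg (2 * k) x x1 * (x - x1) = x ^ (2 * k) - x1 ^ (2 * k) := Sg_mul _ _ _
  have h2 : Sg (2 * k) x3 x2 * (x3 - x2) = x3 ^ (2 * k) - x2 ^ (2 * k) := Sg_mul _ _ _
  have hd : Sg (2 * k) x x1 - Sg (2 * k) x3 x2 = (x - x3) * Rp k x x1 x2 x3 := by
    rw [show Sg (2 * k) x x1 = ∑ i ∈ Finset.range (2 * k), x ^ i * x1 ^ (2 * k - 1 - i) from rfl,
      show Sg (2 * k) x3 x2 = ∑ i ∈ Finset.range (2 * k), x3 ^ i * x2 ^ (2 * k - 1 - i) from rfl]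
    unfold Rp
    rw [← Finset.sum_sub_distrib, Finset.mul_sum]
    refine Finset.sum_congr rfl fun i hi => ?_
    have g1 : Sg i x x3 * (x - x3) = x ^ i - x3 ^ i := Sg_mul _ _ _
    have g2 : Sg (2 * k - 1 - i) x1 x2 * (x1 - x2)
        = x1 ^ (2 * k - 1 - i) - x2 ^ (2 * k - 1 - i) := Sg_mul _ _ _
    have hx12 : x1 - x2 = x - x3 := by rw [hx]; ring
    linear_combination (-(x1 ^ (2 * k - 1 - i))) * g1 - x3 ^ i * g2
      + x3 ^ i * Sg (2 * k - 1 - i) x1 x2 * hx12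
  have hb : x3 - x2 = x - x1 := by rw [hx]; ring
  linear_combination (-1 : ℝ) * h1 + h2 + (x - x1) * hd - Sg (2 * k) x3 x2 * hb

lemma Rp_hom (k : ℕ) (t x x1 x2 x3 : ℝ) :
    t ^ 2 * Rp k (t * x) (t * x1) (t * x2) (t * x3) = t ^ (2 * k) * Rp k x x1 x2 x3 := by
  unfold Rp
  rw [Finset.mul_sum, Finset.mul_sum]
  refine Finset.sum_congr rfl fun i hi => ?_
  have hi' := Finset.mem_range.mp hi
  have e1 := Sg_hom i t x x3
  have e2 := Sg_hom (2 * k - 1 - i) t x1 x2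
  have ht : t ^ (2 * k) = t ^ i * t ^ (2 * k - 1 - i) * t := by
    rw [← pow_add, ← pow_succ]
    congr 1
    omega
  rw [ht, mul_pow, mul_pow]
  linear_combination (t * (t ^ (2 * k - 1 - i) * x1 ^ (2 * k - 1 - i))) * e1
    + (t ^ i * x3 ^ i * t) * e2

lemma Rp_diag (k : ℕ) (hk : 1 ≤ k) (x : ℝ) (hx : x ≠ 0) : 0 < Rp k x x x x := by
  have hval : Rp k x x x x = ((2 * k : ℕ) : ℝ) * (((2 * k - 1 : ℕ) : ℝ) * x ^ (2 * k - 2)) := by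
    unfold Rp
    rw [Finset.sum_congr rfl (fun i hi => ?_), Finset.sum_const, Finset.card_range,
      nsmul_eq_mul]
    have hi' := Finset.mem_range.mp hi
    rw [Sg_diag, Sg_diag]
    rcases Nat.eq_zero_or_pos i with h0 | hpos
    · subst h0
      simp only [Nat.cast_zero, zero_mul, pow_zero, one_mul, Nat.sub_zero, zero_add]
      rw [show 2 * k - 1 - 1 = 2 * k - 2 from by omega]
    · rcases Nat.lt_or_ge i (2 * k - 1) with hlt | hge
      · have p1 : x ^ (i - 1) * x ^ (2 * k - 1 - i) = x ^ (2 * k - 2) := by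
          rw [← pow_add]; congr 1; omega
        have p2 : x ^ i * x ^ (2 * k - 1 - i - 1) = x ^ (2 * k - 2) := by
          rw [← pow_add]; congr 1; omega
        have hcast : ((2 * k - 1 : ℕ) : ℝ) = (i : ℝ) + ((2 * k - 1 - i : ℕ) : ℝ) := by
          rw [← Nat.cast_add]
          congr 1
          omega
        linear_combination (i : ℝ) * p1 + ((2 * k - 1 - i : ℕ) : ℝ) * p2
          - x ^ (2 * k - 2) * hcast
      · have hi2 : i = 2 * k - 1 := by omega
        subst hi2
        rw [show 2 * k - 1 - (2 * k - 1) = 0 from by omega]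
        simp only [Nat.cast_zero, zero_mul, mul_zero, pow_zero, mul_one, add_zero]
        rw [show 2 * k - 1 - 1 = 2 * k - 2 from by omega]
  rw [hval]
  have he : Even (2 * k - 2) := ⟨k - 1, by omega⟩
  have := he.pow_pos hx
  have c1 : (0 : ℝ) < ((2 * k : ℕ) : ℝ) := by positivity
  have c2 : (0 : ℝ) < ((2 * k - 1 : ℕ) : ℝ) := by
    have : 0 < 2 * k - 1 := by omega
    exact_mod_cast this
  positivity

lemma Rb1 (k : ℕ) (x y : ℝ) :
    (x - y) * Rp k x x y y = ((2 * k : ℕ) : ℝ) * (x ^ (2 * k - 1) - y ^ (2 * k - 1)) := by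
  have hfun : (fun t : ℝ => (x - y) * Rp k x (x - t) (y - t) y)
      = fun t : ℝ => Sg (2 * k) x (x - t) - Sg (2 * k) y (y - t) := by
    apply Continuous.ext_on (dense_compl_singleton (0 : ℝ))
    · exact continuous_const.mul
        (Rp_cont k continuous_const (continuous_const.sub continuous_id)
          (continuous_const.sub continuous_id) continuous_const)
    · exact (Sg_cont _ continuous_const (continuous_const.sub continuous_id)).sub
        (Sg_cont _ continuous_const (continuous_const.sub continuous_id))
    · intro t ht
      have ht' : t ≠ 0 := ht
      have hmain := key_ident k x (x - t) (y - t) y (by ring)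
      have g1 : Sg (2 * k) x (x - t) * (x - (x - t)) = x ^ (2 * k) - (x - t) ^ (2 * k) :=
        Sg_mul _ _ _
      have g2 : Sg (2 * k) y (y - t) * (y - (y - t)) = y ^ (2 * k) - (y - t) ^ (2 * k) :=
        Sg_mul _ _ _
      refine mul_left_cancel₀ ht' ?_
      linear_combination -hmain - g1 + g2
  have h0 := congrFun hfun 0
  simp only [sub_zero] at h0
  rw [h0, Sg_diag, Sg_diag]
  ring

lemma Rb2 (k : ℕ) (x y : ℝ) :
    (x - y) * Rp k x y y x = ((2 * k : ℕ) : ℝ) * (x ^ (2 * k - 1) - y ^ (2 * k - 1)) := by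
  have hfun : (fun t : ℝ => (x + t - y) * Rp k (x + t) y (y - t) x)
      = fun t : ℝ => Sg (2 * k) (x + t) x - Sg (2 * k) y (y - t) := by
    apply Continuous.ext_on (dense_compl_singleton (0 : ℝ))
    · exact ((continuous_const.add continuous_id).sub continuous_const).mul
        (Rp_cont k (continuous_const.add continuous_id) continuous_const
          (continuous_const.sub continuous_id) continuous_const)
    · exact (Sg_cont _ (continuous_const.add continuous_id) continuous_const).sub
        (Sg_cont _ continuous_const (continuous_const.sub continuous_id))
    · intro t ht
      have ht' : t ≠ 0 := ht
      have hmain := key_ident k (x + t) y (y - t) x (by ring)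
      have g1 : Sg (2 * k) (x + t) x * ((x + t) - x) = (x + t) ^ (2 * k) - x ^ (2 * k) :=
        Sg_mul _ _ _
      have g2 : Sg (2 * k) y (y - t) * (y - (y - t)) = y ^ (2 * k) - (y - t) ^ (2 * k) :=
        Sg_mul _ _ _
      refine mul_left_cancel₀ ht' ?_
      linear_combination -hmain - g1 + g2
  have h0 := congrFun hfun 0
  simp only [sub_zero, add_zero] at h0
  rw [h0, Sg_diag, Sg_diag]
  ring

/-- From the slope identity, positivity of `P`. -/
lemma aux_pos (k : ℕ) (hk : 1 ≤ k) (u v P : ℝ) (hne : u ≠ v)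
    (hEq : (u - v) * P = ((2 * k : ℕ) : ℝ) * (u ^ (2 * k - 1) - v ^ (2 * k - 1))) :
    0 < P := by
  have hodd : Odd (2 * k - 1) := ⟨k - 1, by omega⟩
  have hmono := hodd.strictMono_pow (R := ℝ)
  have hcast : (0 : ℝ) < ((2 * k : ℕ) : ℝ) := by positivity
  rcases hne.lt_or_gt with h | h
  · have h1 : u ^ (2 * k - 1) < v ^ (2 * k - 1) := hmono h
    by_contra hP
    push_neg at hP
    nlinarith [mul_nonneg (by linarith : (0 : ℝ) ≤ v - u) (by linarith : (0 : ℝ) ≤ -P)]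
  · have h1 : v ^ (2 * k - 1) < u ^ (2 * k - 1) := hmono h
    by_contra hP
    push_neg at hP
    nlinarith [mul_nonneg (by linarith : (0 : ℝ) ≤ u - v) (by linarith : (0 : ℝ) ≤ -P)]

lemma second_diff_pos (k : ℕ) (hk : 1 ≤ k) (x a b : ℝ) (ha : 0 < a) (hb : 0 < b) :
    (x + a) ^ (2 * k) + (x + b) ^ (2 * k) < x ^ (2 * k) + (x + a + b) ^ (2 * k) := by
  have hconv : StrictConvexOn ℝ Set.univ (fun y : ℝ => y ^ (2 * k)) :=
    Even.strictConvexOn_pow (even_two_mul k) (by omega)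
  have hab : 0 < a + b := by linarith
  have hne : x ≠ x + a + b := fun h => by linarith [h.le, h.ge]
  have l1pos : 0 < b / (a + b) := by positivity
  have l2pos : 0 < a / (a + b) := by positivity
  have hsum : b / (a + b) + a / (a + b) = 1 := by
    rw [← add_div, add_comm b a, div_self hab.ne']
  have hsum' : a / (a + b) + b / (a + b) = 1 := by
    rw [← add_div, div_self hab.ne']
  have h1 := hconv.2 (Set.mem_univ x) (Set.mem_univ (x + a + b)) hne l1pos l2pos hsum
  have h2 := hconv.2 (Set.mem_univ x) (Set.mem_univ (x + a + b)) hne l2pos l1pos hsum'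
  have e1 : (b / (a + b)) • x + (a / (a + b)) • (x + a + b) = x + a := by
    simp only [smul_eq_mul]
    field_simp
    ring
  have e2 : (a / (a + b)) • x + (b / (a + b)) • (x + a + b) = x + b := by
    simp only [smul_eq_mul]
    field_simp
    ring
  rw [e1] at h1
  rw [e2] at h2
  simp only [smul_eq_mul] at h1 h2
  have hadd := add_lt_add h1 h2
  have hcomb : (b / (a + b) * x ^ (2 * k) + a / (a + b) * (x + a + b) ^ (2 * k))
      + (a / (a + b) * x ^ (2 * k) + b / (a + b) * (x + a + b) ^ (2 * k))
      = x ^ (2 * k) + (x + a + b) ^ (2 * k) := by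
    linear_combination (x ^ (2 * k) + (x + a + b) ^ (2 * k)) * hsum
  linarith

lemma Rpos (k : ℕ) (hk : 1 ≤ k) (x1 x2 x3 : ℝ) (h : ¬(x1 = 0 ∧ x2 = 0 ∧ x3 = 0)) :
    0 < Rp k (x1 - x2 + x3) x1 x2 x3 := by
  set x := x1 - x2 + x3 with hxdef
  by_cases hB : x = x1
  · have h23 : x2 = x3 := by rw [hxdef] at hB; linarith
    by_cases hA : x = x3
    · -- all four equal
      have hx1 : x1 = x := hB.symm
      have hx3 : x3 = x := hA.symm
      have hx2 : x2 = x := by rw [h23, hx3]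
      rw [hx1, hx2, hx3]
      apply Rp_diag k hk
      intro hx0
      exact h ⟨by rw [hx1, hx0], by rw [hx2, hx0], by rw [hx3, hx0]⟩
    · -- b = 0, a ≠ 0
      have hx1 : x1 = x := hB.symm
      have hne : x ≠ x3 := hA
      rw [hx1, h23] at *
      exact aux_pos k hk x x3 _ hne (by rw [← hx1] at *; exact Rb1 k x x3)
  · by_cases hA : x = x3
    · -- a = 0, b ≠ 0
      have h12 : x1 = x2 := by rw [hxdef] at hA; linarith
      have hgoal : Rp k x x1 x2 x3 = Rp k x3 x1 x1 x3 := by rw [hA, ← h12]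
      rw [hgoal]
      refine aux_pos k hk x3 x1 _ ?_ (Rb2 k x3 x1)
      intro hx31
      exact hB (by rw [hA, hx31])
    · -- interior case
      have hmain := key_ident k x x1 x2 x3 hxdef
      have hBne : x - x1 ≠ 0 := sub_ne_zero.mpr hB
      have hAne : x - x3 ≠ 0 := sub_ne_zero.mpr hA
      by_contra hR
      push_neg at hR
      rcases hBne.lt_or_gt with hBlt | hBgt <;> rcases hAne.lt_or_gt with hAlt | hAgt
      · -- A < 0, B < 0 : Φ > 0
        have hsc := second_diff_pos k hk x (-(x - x3)) (-(x - x1))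
          (by linarith) (by linarith)
        have e1 : x + -(x - x3) = x3 := by ring
        have e2 : x + -(x - x1) = x1 := by ring
        have e3 : x + -(x - x3) + -(x - x1) = x2 := by rw [hxdef]; ring
        rw [e3, e1, e2] at hsc
        nlinarith [mul_nonneg (by linarith : (0:ℝ) ≤ -(x - x1))
          (mul_nonneg (by linarith : (0:ℝ) ≤ -(x - x3)) (by linarith : (0:ℝ) ≤ -(Rp k x x1 x2 x3)))]
      · -- A > 0, B < 0 : Φ < 0
        have hsc := second_diff_pos k hk x3 (x - x3) (-(x - x1))
          (by linarith) (by linarith)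
        have e1 : x3 + (x - x3) = x := by ring
        have e2 : x3 + -(x - x1) = x2 := by rw [hxdef]; ring
        have e3 : x3 + (x - x3) + -(x - x1) = x1 := by ring
        rw [e3, e1, e2] at hsc
        nlinarith [mul_nonneg (by linarith : (0:ℝ) ≤ -(x - x1))
          (mul_nonneg (by linarith : (0:ℝ) ≤ x - x3) (by linarith : (0:ℝ) ≤ -(Rp k x x1 x2 x3)))]
      · -- A < 0, B > 0 : Φ < 0
        have hsc := second_diff_pos k hk x1 (-(x - x3)) (x - x1)
          (by linarith) (by linarith)
        have e1 : x1 + -(x - x3) = x2 := by rw [hxdef]; ring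
        have e2 : x1 + (x - x1) = x := by ring
        have e3 : x1 + -(x - x3) + (x - x1) = x3 := by rw [hxdef]; ring
        rw [e3, e1, e2] at hsc
        nlinarith [mul_nonneg (by linarith : (0:ℝ) ≤ x - x1)
          (mul_nonneg (by linarith : (0:ℝ) ≤ -(x - x3)) (by linarith : (0:ℝ) ≤ -(Rp k x x1 x2 x3)))]
      · -- A > 0, B > 0 : Φ > 0
        have hsc := second_diff_pos k hk x2 (x - x3) (x - x1)
          (by linarith) (by linarith)
        have e1 : x2 + (x - x3) = x1 := by rw [hxdef]; ring
        have e2 : x2 + (x - x1) = x3 := by rw [hxdef]; ring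
        have e3 : x2 + (x - x3) + (x - x1) = x := by rw [hxdef]; ring
        rw [e3, e1, e2] at hsc
        nlinarith [mul_nonneg (by linarith : (0:ℝ) ≤ x - x1)
          (mul_nonneg (by linarith : (0:ℝ) ≤ x - x3) (by linarith : (0:ℝ) ≤ -(Rp k x x1 x2 x3)))]

/-- Two-sided bound `|Φ_{2k}| ∼ max{|ξ|,|ξ₁|,|ξ₂|,|ξ₃|}^{2k−2} |ξ−ξ₁| |ξ−ξ₃|` under
`ξ = ξ₁ − ξ₂ + ξ₃`, for each `k ≥ 1`. -/
theorem phi2k_comparable (k : ℕ) (hk : 1 ≤ k) :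
    ∃ c C : ℝ, 0 < c ∧ 0 < C ∧
      ∀ ξ₁ ξ₂ ξ₃ ξ M : ℝ, ξ = ξ₁ - ξ₂ + ξ₃ →
        M = max (max |ξ| |ξ₁|) (max |ξ₂| |ξ₃|) →
        c * M ^ (2 * k - 2) * |ξ - ξ₁| * |ξ - ξ₃| ≤
            |ξ ^ (2 * k) - ξ₁ ^ (2 * k) + ξ₂ ^ (2 * k) - ξ₃ ^ (2 * k)| ∧
        |ξ ^ (2 * k) - ξ₁ ^ (2 * k) + ξ₂ ^ (2 * k) - ξ₃ ^ (2 * k)| ≤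
            C * M ^ (2 * k - 2) * |ξ - ξ₁| * |ξ - ξ₃| := by
  -- the normalizing function and compact set
  set Mf : ℝ × ℝ × ℝ → ℝ :=
    fun p => max (max |p.1 - p.2.1 + p.2.2| |p.1|) (max |p.2.1| |p.2.2|) with hMf
  set G : ℝ × ℝ × ℝ → ℝ :=
    fun p => Rp k (p.1 - p.2.1 + p.2.2) p.1 p.2.1 p.2.2 with hG
  have hMfc : Continuous Mf := by
    apply Continuous.max
    · exact (((continuous_fst.sub (continuous_fst.comp continuous_snd)).add
        (continuous_snd.comp continuous_snd)).abs).max continuous_fst.abs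
    · exact ((continuous_fst.comp continuous_snd).abs).max
        ((continuous_snd.comp continuous_snd).abs)
  have hGc : Continuous G :=
    Rp_cont k ((continuous_fst.sub (continuous_fst.comp continuous_snd)).add
      (continuous_snd.comp continuous_snd)) continuous_fst
      (continuous_fst.comp continuous_snd) (continuous_snd.comp continuous_snd)
  set K : Set (ℝ × ℝ × ℝ) := {p | Mf p = 1} with hK
  have hKcl : IsClosed K := isClosed_eq hMfc continuous_const
  have hKsub : K ⊆ Metric.closedBall 0 1 := by
    intro p hp
    have hp1 : Mf p = 1 := hp
    rw [mem_closedBall_zero_iff]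
    have h1 : |p.1| ≤ 1 := by
      rw [← hp1]
      exact le_trans (le_max_right _ _) (le_max_left _ _)
    have h2 : |p.2.1| ≤ 1 := by
      rw [← hp1]
      exact le_trans (le_max_left _ _) (le_max_right _ _)
    have h3 : |p.2.2| ≤ 1 := by
      rw [← hp1]
      exact le_trans (le_max_right _ _) (le_max_right _ _)
    calc ‖p‖ = max ‖p.1‖ (max ‖p.2.1‖ ‖p.2.2‖) := by
          rw [Prod.norm_def, Prod.norm_def]
      _ ≤ 1 := by
          simp only [Real.norm_eq_abs]
          exact max_le h1 (max_le h2 h3)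
  have hKcomp : IsCompact K :=
    (isCompact_closedBall (0 : ℝ × ℝ × ℝ) 1).of_isClosed_subset hKcl hKsub
  have hKne : K.Nonempty := by
    refine ⟨(1, 1, 1), ?_⟩
    show Mf (1, 1, 1) = 1
    norm_num [hMf]
  have hGposK : ∀ p ∈ K, 0 < G p := by
    intro p hp
    apply Rpos k hk
    rintro ⟨h1, h2, h3⟩
    have : Mf p = 0 := by simp [hMf, h1, h2, h3]
    rw [hp] at this
    norm_num at this
  obtain ⟨pmin, hpminK, hmin⟩ := hKcomp.exists_isMinOn hKne hGc.continuousOn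
  obtain ⟨pmax, hpmaxK, hmax⟩ := hKcomp.exists_isMaxOn hKne hGc.continuousOn
  refine ⟨G pmin, G pmax, hGposK _ hpminK, hGposK _ hpmaxK, ?_⟩
  intro ξ₁ ξ₂ ξ₃ ξ M hξ hM
  have hMnn : 0 ≤ M := by
    rw [hM]
    exact le_trans (abs_nonneg ξ₁) (le_trans (le_max_right _ _) (le_max_left _ _))
  by_cases hM0 : M = 0
  · -- everything vanishes
    have hb1 : |ξ₁| ≤ M := by
      rw [hM]; exact le_trans (le_max_right _ _) (le_max_left _ _)
    have hb2 : |ξ₂| ≤ M := by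
      rw [hM]; exact le_trans (le_max_left _ _) (le_max_right _ _)
    have hb3 : |ξ₃| ≤ M := by
      rw [hM]; exact le_trans (le_max_right _ _) (le_max_right _ _)
    have e1 : ξ₁ = 0 := by rw [hM0] at hb1; exact abs_eq_zero.mp (le_antisymm hb1 (abs_nonneg _))
    have e2 : ξ₂ = 0 := by rw [hM0] at hb2; exact abs_eq_zero.mp (le_antisymm hb2 (abs_nonneg _))
    have e3 : ξ₃ = 0 := by rw [hM0] at hb3; exact abs_eq_zero.mp (le_antisymm hb3 (abs_nonneg _))
    have e0 : ξ = 0 := by rw [hξ, e1, e2, e3]; ring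
    have hz : (0 : ℝ) ^ (2 * k) = 0 := zero_pow (by omega)
    constructor <;> simp [e0, e1, e2, e3, hz]
  · have hMpos : 0 < M := lt_of_le_of_ne hMnn (Ne.symm hM0)
    set p : ℝ × ℝ × ℝ := (ξ₁ / M, ξ₂ / M, ξ₃ / M) with hp
    have hdiv : ξ₁ / M - ξ₂ / M + ξ₃ / M = ξ / M := by rw [hξ]; ring
    have hpK : p ∈ K := by
      show Mf p = 1
      have : Mf p = max (max |ξ / M| |ξ₁ / M|) (max |ξ₂ / M| |ξ₃ / M|) := by
        simp only [hMf, hp, hdiv]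
      rw [this]
      rw [abs_div, abs_div, abs_div, abs_div, abs_of_pos hMpos,
        max_div_div_right hMnn, max_div_div_right hMnn, max_div_div_right hMnn, ← hM]
      exact div_self hM0
    have hmain := key_ident k ξ ξ₁ ξ₂ ξ₃ hξ
    -- homogeneity
    have hcan : ∀ z : ℝ, M * (z / M) = z := fun z => by field_simp
    have hhom0 := Rp_hom k M (ξ / M) (ξ₁ / M) (ξ₂ / M) (ξ₃ / M)
    rw [hcan, hcan, hcan, hcan] at hhom0
    have hGp : G p = Rp k (ξ / M) (ξ₁ / M) (ξ₂ / M) (ξ₃ / M) := by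
      simp only [hG, hp, hdiv]
    have hpowsplit : M ^ (2 * k) = M ^ (2 * k - 2) * M ^ 2 := by
      rw [← pow_add]; congr 1; omega
    have hhom : Rp k ξ ξ₁ ξ₂ ξ₃ = M ^ (2 * k - 2) * G p := by
      have hM2 : (M : ℝ) ^ 2 ≠ 0 := pow_ne_zero 2 hM0
      apply mul_left_cancel₀ hM2
      rw [hGp]
      calc M ^ 2 * Rp k ξ ξ₁ ξ₂ ξ₃
          = M ^ (2 * k) * Rp k (ξ / M) (ξ₁ / M) (ξ₂ / M) (ξ₃ / M) := hhom0
        _ = M ^ 2 * (M ^ (2 * k - 2) * Rp k (ξ / M) (ξ₁ / M) (ξ₂ / M) (ξ₃ / M)) := by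
            rw [hpowsplit]; ring
    have hGlb : G pmin ≤ G p := hmin hpK
    have hGub : G p ≤ G pmax := hmax hpK
    have hGppos : 0 < G p := hGposK p hpK
    have hRpos' : 0 < Rp k ξ ξ₁ ξ₂ ξ₃ := by
      rw [hhom]
      exact mul_pos (pow_pos hMpos _) hGppos
    have habs : |ξ ^ (2 * k) - ξ₁ ^ (2 * k) + ξ₂ ^ (2 * k) - ξ₃ ^ (2 * k)|
        = |ξ - ξ₁| * (|ξ - ξ₃| * Rp k ξ ξ₁ ξ₂ ξ₃) := by
      rw [hmain, abs_mul, abs_mul, abs_of_pos hRpos']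
    constructor
    · rw [habs, hhom]
      calc G pmin * M ^ (2 * k - 2) * |ξ - ξ₁| * |ξ - ξ₃|
          = G pmin * (M ^ (2 * k - 2) * (|ξ - ξ₁| * |ξ - ξ₃|)) := by ring
        _ ≤ G p * (M ^ (2 * k - 2) * (|ξ - ξ₁| * |ξ - ξ₃|)) := by
            apply mul_le_mul_of_nonneg_right hGlb
            positivity
        _ = |ξ - ξ₁| * (|ξ - ξ₃| * (M ^ (2 * k - 2) * G p)) := by ring
    · rw [habs, hhom]
      calc |ξ - ξ₁| * (|ξ - ξ₃| * (M ^ (2 * k - 2) * G p))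
          = G p * (M ^ (2 * k - 2) * (|ξ - ξ₁| * |ξ - ξ₃|)) := by ring
        _ ≤ G pmax * (M ^ (2 * k - 2) * (|ξ - ξ₁| * |ξ - ξ₃|)) := by
            apply mul_le_mul_of_nonneg_right hGub
            positivity
        _ = G pmax * M ^ (2 * k - 2) * |ξ - ξ₁| * |ξ - ξ₃| := by ring
end

section
/- For every integer k ≥ 1 there exists a constant c > 0 such that for all real numbers ξ₁, ξ₂, ξ₃, setting ξ = ξ₁ − ξ₂ + ξ₃, one has |Φ_{2k}(ξ, ξ₁, ξ₂, ξ₃)| ≥ c · |Φ₂(ξ, ξ₁, ξ₂, ξ₃)|^k. -/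
lemma key_pack (k : ℕ) : ∀ m α β : ℝ, 0 ≤ m → 0 ≤ β → β ≤ α →
    (2*(α^(2*k) - β^(2*k)) ≤ ((m+α)^(2*k) + (m-α)^(2*k)) - ((m+β)^(2*k) + (m-β)^(2*k)))
    ∧ (0 ≤ β * ((m+β)^(2*k) - (m-β)^(2*k)))
    ∧ (β * ((m+β)^(2*k) - (m-β)^(2*k)) ≤ α * ((m+α)^(2*k) - (m-α)^(2*k)))
    ∧ (2*β^(2*k) ≤ (m+β)^(2*k) + (m-β)^(2*k)) := by
  induction k with
  | zero => intro m α β hm hβ hαβ; norm_num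
  | succ k ih =>
    intro m α β hm hβ hαβ
    have hα : 0 ≤ α := hβ.trans hαβ
    obtain ⟨h1, h2, h3, h4⟩ := ih m α β hm hβ hαβ
    obtain ⟨-, h2α, -, h4α⟩ := ih m α α hm hα le_rfl
    have hP : β^(2*k) ≤ α^(2*k) := pow_le_pow_left₀ hβ hαβ _
    have hPβ : (0:ℝ) ≤ β^(2*k) := pow_nonneg hβ _
    have hsq : β^2 ≤ α^2 := pow_le_pow_left₀ hβ hαβ 2
    have hBB : (0:ℝ) ≤ (m+β)^(2*k) + (m-β)^(2*k) := le_trans (by positivity) h4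
    have hAB : (m+β)^(2*k) + (m-β)^(2*k) ≤ (m+α)^(2*k) + (m-α)^(2*k) := by linarith
    rw [show 2*(k+1) = 2*k+2 from by ring]
    simp only [pow_add]
    refine ⟨?_, ?_, ?_, ?_⟩
    · have t1 : (0:ℝ) ≤ m^2 * ((((m+α)^(2*k) + (m-α)^(2*k)) - ((m+β)^(2*k) + (m-β)^(2*k))) - 2*(α^(2*k) - β^(2*k))) :=
        mul_nonneg (sq_nonneg m) (by linarith)
      have t2 : (0:ℝ) ≤ (2*m) * (α * ((m+α)^(2*k) - (m-α)^(2*k)) - β * ((m+β)^(2*k) - (m-β)^(2*k))) :=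
        mul_nonneg (by linarith) (by linarith)
      have t3 : (0:ℝ) ≤ α^2 * ((((m+α)^(2*k) + (m-α)^(2*k)) - ((m+β)^(2*k) + (m-β)^(2*k))) - 2*(α^(2*k) - β^(2*k))) :=
        mul_nonneg (sq_nonneg α) (by linarith)
      have t4 : (0:ℝ) ≤ (α^2 - β^2) * (((m+β)^(2*k) + (m-β)^(2*k)) - 2*β^(2*k)) :=
        mul_nonneg (by linarith) (by linarith)
      have t5 : (0:ℝ) ≤ m^2 * (α^(2*k) - β^(2*k)) := mul_nonneg (sq_nonneg m) (by linarith)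
      nlinarith [t1, t2, t3, t4, t5]
    · have u1 : (0:ℝ) ≤ (m^2 + β^2) * (β * ((m+β)^(2*k) - (m-β)^(2*k))) :=
        mul_nonneg (by positivity) h2
      have u2 : (0:ℝ) ≤ (2*m) * β^2 * ((m+β)^(2*k) + (m-β)^(2*k)) :=
        mul_nonneg (mul_nonneg (by linarith) (sq_nonneg β)) hBB
      nlinarith [u1, u2]
    · have v1 : (0:ℝ) ≤ m^2 * (α * ((m+α)^(2*k) - (m-α)^(2*k)) - β * ((m+β)^(2*k) - (m-β)^(2*k))) :=
        mul_nonneg (sq_nonneg m) (by linarith)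
      have v2 : (0:ℝ) ≤ α^2 * (α * ((m+α)^(2*k) - (m-α)^(2*k)) - β * ((m+β)^(2*k) - (m-β)^(2*k))) :=
        mul_nonneg (sq_nonneg α) (by linarith)
      have v3 : (0:ℝ) ≤ (α^2 - β^2) * (β * ((m+β)^(2*k) - (m-β)^(2*k))) :=
        mul_nonneg (by linarith) h2
      have v4 : (0:ℝ) ≤ (2*m) * (α^2 * (((m+α)^(2*k) + (m-α)^(2*k)) - ((m+β)^(2*k) + (m-β)^(2*k)))) :=
        mul_nonneg (by linarith) (mul_nonneg (sq_nonneg α) (by linarith))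
      have v5 : (0:ℝ) ≤ (2*m) * ((α^2 - β^2) * ((m+β)^(2*k) + (m-β)^(2*k))) :=
        mul_nonneg (by linarith) (mul_nonneg (by linarith) hBB)
      nlinarith [v1, v2, v3, v4, v5]
    · have w1 : (0:ℝ) ≤ m^2 * ((m+β)^(2*k) + (m-β)^(2*k)) := mul_nonneg (sq_nonneg m) hBB
      have w2 : (0:ℝ) ≤ (2*m) * (β * ((m+β)^(2*k) - (m-β)^(2*k))) := mul_nonneg (by linarith) h2
      have w3 : (0:ℝ) ≤ β^2 * (((m+β)^(2*k) + (m-β)^(2*k)) - 2*β^(2*k)) :=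
        mul_nonneg (sq_nonneg β) (by linarith)
      nlinarith [w1, w2, w3]

lemma habs_pair (k : ℕ) (m t : ℝ) :
    (|m|+|t|)^(2*k) + (|m|-|t|)^(2*k) = (m+t)^(2*k) + (m-t)^(2*k) := by
  have ev : Even (2*k) := even_two_mul k
  rcases abs_cases m with ⟨h1,-⟩|⟨h1,-⟩ <;> rcases abs_cases t with ⟨h2,-⟩|⟨h2,-⟩ <;> rw [h1, h2]
  · rw [show m + -t = m - t from by ring, show m - -t = m + t from by ring, add_comm]
  · rw [show -m + t = -(m - t) from by ring, show -m - t = -(m + t) from by ring,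
      ev.neg_pow, ev.neg_pow, add_comm]
  · rw [show -m + -t = -(m + t) from by ring, show -m - -t = -(m - t) from by ring,
      ev.neg_pow, ev.neg_pow]

lemma main2 (k : ℕ) (hk : 1 ≤ k) (m a b : ℝ) (hba : b^2 ≤ a^2) :
    2*(a^2 - b^2)^k ≤ ((m+a)^(2*k) + (m-a)^(2*k)) - ((m+b)^(2*k) + (m-b)^(2*k)) := by
  have hab : |b| ≤ |a| := by
    apply le_of_pow_le_pow_left₀ two_ne_zero (abs_nonneg a)
    rw [sq_abs, sq_abs]; exact hba
  obtain ⟨h1, -, -, -⟩ := key_pack k |m| |a| |b| (abs_nonneg m) (abs_nonneg b) hab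
  rw [habs_pair k m a, habs_pair k m b] at h1
  rw [show |a|^(2*k) = (a^2)^k from by rw [pow_mul, sq_abs],
      show |b|^(2*k) = (b^2)^k from by rw [pow_mul, sq_abs]] at h1
  have h5 : (a^2 - b^2)^k + (b^2)^k ≤ (a^2)^k := by
    have := pow_add_pow_le (x := a^2 - b^2) (y := b^2) (by linarith) (by positivity)
      (by omega : k ≠ 0)
    rwa [show a^2 - b^2 + b^2 = a^2 from by ring] at this
  linarith

/-- `|Φ_{2k}| ≳ |Φ₂|^k` under `ξ = ξ₁ − ξ₂ + ξ₃`, for each `k ≥ 1`. -/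
theorem phi2k_ge_phi2_pow (k : ℕ) (hk : 1 ≤ k) :
    ∃ c : ℝ, 0 < c ∧
      ∀ ξ₁ ξ₂ ξ₃ ξ : ℝ, ξ = ξ₁ - ξ₂ + ξ₃ →
        c * |ξ ^ 2 - ξ₁ ^ 2 + ξ₂ ^ 2 - ξ₃ ^ 2| ^ k ≤
          |ξ ^ (2 * k) - ξ₁ ^ (2 * k) + ξ₂ ^ (2 * k) - ξ₃ ^ (2 * k)| := by
  refine ⟨(1/2)^k, by positivity, ?_⟩
  intro ξ₁ ξ₂ ξ₃ ξ hξ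
  subst hξ
  set m : ℝ := (ξ₁+ξ₃)/2 with hm
  set a : ℝ := (ξ₁-2*ξ₂+ξ₃)/2 with ha
  set b : ℝ := (ξ₁-ξ₃)/2 with hb
  have e2 : (ξ₁-ξ₂+ξ₃)^2 - ξ₁^2 + ξ₂^2 - ξ₃^2 = 2*a^2 - 2*b^2 := by
    rw [ha, hb]; ring
  have eΦ : (ξ₁-ξ₂+ξ₃)^(2*k) - ξ₁^(2*k) + ξ₂^(2*k) - ξ₃^(2*k)
      = ((m+a)^(2*k) + (m-a)^(2*k)) - ((m+b)^(2*k) + (m-b)^(2*k)) := by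
    rw [hm, ha, hb,
      show (ξ₁+ξ₃)/2 + (ξ₁-2*ξ₂+ξ₃)/2 = ξ₁-ξ₂+ξ₃ from by ring,
      show (ξ₁+ξ₃)/2 - (ξ₁-2*ξ₂+ξ₃)/2 = ξ₂ from by ring,
      show (ξ₁+ξ₃)/2 + (ξ₁-ξ₃)/2 = ξ₁ from by ring,
      show (ξ₁+ξ₃)/2 - (ξ₁-ξ₃)/2 = ξ₃ from by ring]
    ring
  rw [e2, eΦ]
  rcases le_total (b^2) (a^2) with hc | hc
  · have h1 := main2 k hk m a b hc
    rw [show |2*a^2 - 2*b^2| = 2*(a^2-b^2) from by rw [abs_of_nonneg (by linarith : (0:ℝ) ≤ 2*a^2 - 2*b^2)]; ring,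
      ← mul_pow, show (1/2:ℝ) * (2*(a^2-b^2)) = a^2 - b^2 from by ring]
    have hnn : (0:ℝ) ≤ (a^2-b^2)^k := pow_nonneg (by linarith) k
    calc (a^2-b^2)^k ≤ 2*(a^2-b^2)^k := by linarith
      _ ≤ ((m+a)^(2*k) + (m-a)^(2*k)) - ((m+b)^(2*k) + (m-b)^(2*k)) := h1
      _ ≤ |((m+a)^(2*k) + (m-a)^(2*k)) - ((m+b)^(2*k) + (m-b)^(2*k))| := le_abs_self _
  · have h1 := main2 k hk m b a hc
    rw [show |2*a^2 - 2*b^2| = 2*(b^2-a^2) from by rw [abs_of_nonpos (by linarith)]; ring,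
      ← mul_pow, show (1/2:ℝ) * (2*(b^2-a^2)) = b^2 - a^2 from by ring]
    have hnn : (0:ℝ) ≤ (b^2-a^2)^k := pow_nonneg (by linarith) k
    calc (b^2-a^2)^k ≤ 2*(b^2-a^2)^k := by linarith
      _ ≤ ((m+b)^(2*k) + (m-b)^(2*k)) - ((m+a)^(2*k) + (m-a)^(2*k)) := h1
      _ ≤ |((m+a)^(2*k) + (m-a)^(2*k)) - ((m+b)^(2*k) + (m-b)^(2*k))| := by
          rw [abs_sub_comm]; exact le_abs_self _
end

section
/- Let k ≥ 1 be an integer and define f : ℝ → ℝ by f(t) = t^{2k} + (1 − t)^{2k}. Then for all real x and y, f(x) = f(y) if and only if x = y or x + y = 1. -/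
/-- For `f(t) = t^{2k} + (1 − t)^{2k}`, one has `f(x) = f(y)` iff `x = y` or `x + y = 1`. -/
theorem f_eq_iff (k : ℕ) (hk : 1 ≤ k) (f : ℝ → ℝ)
    (hf : ∀ t : ℝ, f t = t ^ (2 * k) + (1 - t) ^ (2 * k)) (x y : ℝ) :
    f x = f y ↔ x = y ∨ x + y = 1 := by
  have hfe : f = fun t : ℝ => t ^ (2 * k) + (1 - t) ^ (2 * k) := funext hf
  subst hfe
  set n := 2 * k with hn
  have hsym : ∀ t : ℝ, (fun t : ℝ => t ^ n + (1 - t) ^ n) t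
      = (fun t : ℝ => t ^ n + (1 - t) ^ n) (1 - t) := by
    intro t
    simp only
    ring_nf
  -- derivative
  have hderiv : ∀ t : ℝ, HasDerivAt (fun t : ℝ => t ^ n + (1 - t) ^ n)
      ((n : ℝ) * t ^ (n - 1) - (n : ℝ) * (1 - t) ^ (n - 1)) t := by
    intro t
    have h1 : HasDerivAt (fun t : ℝ => t ^ n) ((n : ℝ) * t ^ (n - 1)) t :=
      hasDerivAt_pow n t
    have h2 : HasDerivAt (fun t : ℝ => 1 - t) (-1 : ℝ) t := by
      simpa using (hasDerivAt_id t).const_sub 1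
    have h3 : HasDerivAt (fun t : ℝ => (1 - t) ^ n)
        ((n : ℝ) * (1 - t) ^ (n - 1) * (-1)) t :=
      (hasDerivAt_pow n (1 - t)).comp t h2
    have : HasDerivAt (fun t : ℝ => t ^ n + (1 - t) ^ n) _ t := h1.add h3
    convert this using 1
    ring
  have hodd : Odd (n - 1) := by
    rcases Nat.exists_eq_add_of_le hk with ⟨m, rfl⟩
    exact ⟨m, by omega⟩
  have hmono : StrictMonoOn (fun t : ℝ => t ^ n + (1 - t) ^ n) (Set.Ici (1/2 : ℝ)) := by
    apply strictMonoOn_of_deriv_pos (convex_Ici _)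
    · exact (Continuous.add (continuous_pow n)
        (((continuous_const.sub continuous_id).pow n))).continuousOn
    · intro t ht
      rw [interior_Ici] at ht
      rw [(hderiv t).deriv]
      have h1 : (1 - t : ℝ) < t := by linarith [Set.mem_Ioi.mp ht]
      have h2 : (1 - t) ^ (n - 1) < t ^ (n - 1) := hodd.strictMono_pow h1
      have hn0 : (0 : ℝ) < n := by positivity
      nlinarith
  constructor
  · intro hxy
    set a := max x (1 - x) with ha
    set b := max y (1 - y) with hb
    have ha2 : a ∈ Set.Ici (1/2 : ℝ) := by
      simp only [Set.mem_Ici, ha]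
      rcases le_total x (1 - x) with h | h
      · rw [max_eq_right h]; linarith
      · rw [max_eq_left h]; linarith
    have hb2 : b ∈ Set.Ici (1/2 : ℝ) := by
      simp only [Set.mem_Ici, hb]
      rcases le_total y (1 - y) with h | h
      · rw [max_eq_right h]; linarith
      · rw [max_eq_left h]; linarith
    have hfa : (fun t : ℝ => t ^ n + (1 - t) ^ n) a
        = (fun t : ℝ => t ^ n + (1 - t) ^ n) x := by
      rcases le_total x (1 - x) with h | h
      · rw [ha, max_eq_right h]; exact (hsym x).symm
      · rw [ha, max_eq_left h]
    have hfb : (fun t : ℝ => t ^ n + (1 - t) ^ n) b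
        = (fun t : ℝ => t ^ n + (1 - t) ^ n) y := by
      rcases le_total y (1 - y) with h | h
      · rw [hb, max_eq_right h]; exact (hsym y).symm
      · rw [hb, max_eq_left h]
    have hab : a = b := hmono.injOn ha2 hb2 (hfa.trans (hxy.trans hfb.symm))
    have hab' : max x (1 - x) = max y (1 - y) := hab
    rcases max_cases x (1 - x) with ⟨h1, _⟩ | ⟨h1, _⟩ <;>
      rcases max_cases y (1 - y) with ⟨h2, _⟩ | ⟨h2, _⟩ <;>
      rw [h1, h2] at hab'
    · exact Or.inl hab'
    · exact Or.inr (by linarith)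
    · exact Or.inr (by linarith)
    · exact Or.inl (by linarith)
  · rintro (rfl | h)
    · rfl
    · have : y = 1 - x := by linarith
      rw [this]
      exact hsym x
end

section
/- Let M ≥ 1 be an integer and let ε₁, …, ε_M be nonnegative real numbers with Σ_{j=1}^{M} ε_j > 0. Then for all real numbers ξ₁, ξ₂, ξ₃, setting ξ = ξ₁ − ξ₂ + ξ₃, if ξ ≠ ξ₁ and ξ ≠ ξ₃ then Σ_{j=1}^{M} ε_j · Φ_{2j}(ξ, ξ₁, ξ₂, ξ₃) ≠ 0. -/
open Finset

private lemma phi_pos (n : ℕ) (hn : n ≠ 0) (x u v : ℝ) (hu : 0 < u) (hv : 0 < v) :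
    (x - u) ^ (2 * n) + (x - v) ^ (2 * n) < x ^ (2 * n) + (x - u - v) ^ (2 * n) := by
  have sc := Even.strictConvexOn_pow (even_two_mul n) (by omega : 2 * n ≠ 0)
  have hsum : v / (u + v) + u / (u + v) = 1 := by field_simp; ring
  have huv : 0 < u + v := by linarith
  have hl : 0 < v / (u + v) := div_pos hv huv
  have hm : 0 < u / (u + v) := div_pos hu huv
  have hne : x - u - v ≠ x := by intro h; linarith
  have h1 := sc.2 (Set.mem_univ (x - u - v)) (Set.mem_univ x) hne hl hm hsum
  have h2 := sc.2 (Set.mem_univ (x - u - v)) (Set.mem_univ x) hne hm hl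
    (by linarith : u / (u + v) + v / (u + v) = 1)
  simp only [smul_eq_mul] at h1 h2
  have e1 : v / (u + v) * (x - u - v) + u / (u + v) * x = x - v := by
    field_simp; ring
  have e2 : u / (u + v) * (x - u - v) + v / (u + v) * x = x - u := by
    field_simp; ring
  rw [e1] at h1
  rw [e2] at h2
  have hc : v / (u + v) * (x - u - v) ^ (2 * n) + u / (u + v) * x ^ (2 * n)
      + (u / (u + v) * (x - u - v) ^ (2 * n) + v / (u + v) * x ^ (2 * n))
      = (x - u - v) ^ (2 * n) + x ^ (2 * n) := by
    linear_combination ((x - u - v) ^ (2 * n) + x ^ (2 * n)) * hsum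
  linarith

private lemma phi_neg (n : ℕ) (hn : n ≠ 0) (x u v : ℝ) (hu : 0 < u) (hv : v < 0) :
    x ^ (2 * n) + (x - u - v) ^ (2 * n) < (x - u) ^ (2 * n) + (x - v) ^ (2 * n) := by
  have sc := Even.strictConvexOn_pow (even_two_mul n) (by omega : 2 * n ≠ 0)
  have huv : 0 < u - v := by linarith
  have hsum : -v / (u - v) + u / (u - v) = 1 := by field_simp; ring
  have hl : 0 < -v / (u - v) := div_pos (by linarith) huv
  have hm : 0 < u / (u - v) := div_pos hu huv
  have hne : x - u ≠ x - v := by intro h; linarith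
  have h1 := sc.2 (Set.mem_univ (x - u)) (Set.mem_univ (x - v)) hne hl hm hsum
  have h2 := sc.2 (Set.mem_univ (x - u)) (Set.mem_univ (x - v)) hne hm hl
    (by linarith : u / (u - v) + -v / (u - v) = 1)
  simp only [smul_eq_mul] at h1 h2
  have e1 : -v / (u - v) * (x - u) + u / (u - v) * (x - v) = x := by
    field_simp; ring
  have e2 : u / (u - v) * (x - u) + -v / (u - v) * (x - v) = x - u - v := by
    field_simp; ring
  rw [e1] at h1
  rw [e2] at h2
  have hc : -v / (u - v) * (x - u) ^ (2 * n) + u / (u - v) * (x - v) ^ (2 * n)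
      + (u / (u - v) * (x - u) ^ (2 * n) + -v / (u - v) * (x - v) ^ (2 * n))
      = (x - u) ^ (2 * n) + (x - v) ^ (2 * n) := by
    linear_combination ((x - u) ^ (2 * n) + (x - v) ^ (2 * n)) * hsum
  linarith

private lemma phi_pos' (n : ℕ) (hn : n ≠ 0) (x u v : ℝ) (huv : 0 < u * v) :
    0 < x ^ (2 * n) - (x - u) ^ (2 * n) + (x - u - v) ^ (2 * n) - (x - v) ^ (2 * n) := by
  rcases lt_or_gt_of_ne (show u ≠ 0 by intro h; simp [h] at huv) with hu | hu
  · have hv : v < 0 := by nlinarith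
    have h := phi_pos n hn (x - u - v) (-u) (-v) (by linarith) (by linarith)
    rw [show x - u - v - -u - -v = x from by ring, show x - u - v - -u = x - v from by ring,
      show x - u - v - -v = x - u from by ring] at h
    linarith
  · have hv : 0 < v := by nlinarith
    have h := phi_pos n hn x u v hu hv
    linarith

private lemma phi_neg' (n : ℕ) (hn : n ≠ 0) (x u v : ℝ) (huv : u * v < 0) :
    x ^ (2 * n) - (x - u) ^ (2 * n) + (x - u - v) ^ (2 * n) - (x - v) ^ (2 * n) < 0 := by
  rcases lt_or_gt_of_ne (show u ≠ 0 by intro h; simp [h] at huv) with hu | hu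
  · have hv : 0 < v := by nlinarith
    have h := phi_neg n hn x v u hv hu
    rw [show x - v - u = x - u - v from by ring] at h
    linarith
  · have hv : v < 0 := by nlinarith
    have h := phi_neg n hn x u v hu hv
    linarith

/-- Nonvanishing of the mixed phase factor `Σ_{j=1}^{M} ε_j Φ_{2j}` in the nonresonant
regime `ξ ≠ ξ₁`, `ξ ≠ ξ₃`, where `ξ = ξ₁ − ξ₂ + ξ₃`. -/
theorem mixed_phase_ne_zero (M : ℕ) (hM : 1 ≤ M) (ε : ℕ → ℝ)
    (hε : ∀ j ∈ Finset.Icc 1 M, 0 ≤ ε j)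
    (hsum : 0 < ∑ j ∈ Finset.Icc 1 M, ε j)
    (ξ₁ ξ₂ ξ₃ ξ : ℝ) (hξ : ξ = ξ₁ - ξ₂ + ξ₃) (h1 : ξ ≠ ξ₁) (h3 : ξ ≠ ξ₃) :
    ∑ j ∈ Finset.Icc 1 M,
        ε j * (ξ ^ (2 * j) - ξ₁ ^ (2 * j) + ξ₂ ^ (2 * j) - ξ₃ ^ (2 * j)) ≠ 0 := by
  set u := ξ - ξ₁ with hu
  set v := ξ - ξ₃ with hv
  have e1 : ξ₁ = ξ - u := by ring
  have e2 : ξ₂ = ξ - u - v := by rw [hu, hv]; linarith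
  have e3 : ξ₃ = ξ - v := by ring
  have hu0 : u ≠ 0 := sub_ne_zero_of_ne h1
  have hv0 : v ≠ 0 := sub_ne_zero_of_ne h3
  have hex : ∃ j ∈ Finset.Icc 1 M, 0 < ε j := by
    by_contra h
    push_neg at h
    have : ∑ j ∈ Finset.Icc 1 M, ε j ≤ 0 := Finset.sum_nonpos fun j hj => h j hj
    linarith
  rw [e1, e2, e3]
  rcases lt_or_gt_of_ne (mul_ne_zero hu0 hv0) with huv | huv
  · have hlt : ∑ j ∈ Finset.Icc 1 M,
        ε j * (ξ ^ (2 * j) - (ξ - u) ^ (2 * j) + (ξ - u - v) ^ (2 * j) - (ξ - v) ^ (2 * j)) < 0 := by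
      have hp := Finset.sum_pos' (s := Finset.Icc 1 M)
        (f := fun j => -(ε j * (ξ ^ (2 * j) - (ξ - u) ^ (2 * j) + (ξ - u - v) ^ (2 * j) - (ξ - v) ^ (2 * j))))
        (fun j hj => by
          have hj1 : j ≠ 0 := by simp at hj; omega
          exact neg_nonneg.2 (mul_nonpos_iff.2 (Or.inl
            ⟨hε j hj, (phi_neg' j hj1 ξ u v huv).le⟩)))
        (by
          obtain ⟨j, hj, hjp⟩ := hex
          have hj1 : j ≠ 0 := by simp at hj; omega
          exact ⟨j, hj, neg_pos.2 (mul_neg_of_pos_of_neg hjp (phi_neg' j hj1 ξ u v huv))⟩)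
      rw [Finset.sum_neg_distrib] at hp
      linarith
    exact ne_of_lt hlt
  · have hgt : 0 < ∑ j ∈ Finset.Icc 1 M,
        ε j * (ξ ^ (2 * j) - (ξ - u) ^ (2 * j) + (ξ - u - v) ^ (2 * j) - (ξ - v) ^ (2 * j)) := by
      refine Finset.sum_pos' (fun j hj => ?_) ?_
      · have hj1 : j ≠ 0 := by simp at hj; omega
        exact mul_nonneg (hε j hj) (phi_pos' j hj1 ξ u v huv).le
      · obtain ⟨j, hj, hjp⟩ := hex
        have hj1 : j ≠ 0 := by simp at hj; omega
        exact ⟨j, hj, mul_pos hjp (phi_pos' j hj1 ξ u v huv)⟩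
    exact hgt.ne'
end

section
/- For every ε > 0 there exists a constant C > 0 such that for every real N ≥ 1 and every integer n, the set A_N(n) = {(n₁, n₂, n₃) ∈ ℤ³ : n₁ − n₂ + n₃ = n, n₁ ≠ n, n₃ ≠ n, |Φ₄(n, n₁, n₂, n₃)| ≤ N} is finite and its cardinality is at most C · N^{1/2 + ε}. -/
lemma harm_sum {δ : ℝ} (h0 : 0 < δ) (h1 : δ ≤ 1) (m : ℕ) :
    ∑ a ∈ Finset.Icc 1 m, (1 : ℝ) / a ≤ (m : ℝ) ^ δ / δ := by
  induction m with
  | zero => simp [Real.zero_rpow h0.ne']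
  | succ m ih =>
    rw [Finset.sum_Icc_succ_top (by omega : 1 ≤ m + 1)]
    have hm1 : (0:ℝ) < (m:ℝ) + 1 := by positivity
    have key : (m:ℝ) ^ δ ≤ ((m:ℝ) + 1) ^ δ - δ / ((m:ℝ) + 1) := by
      have hs : (-1 : ℝ) ≤ -1 / ((m:ℝ) + 1) := by
        rw [neg_div]
        have : 1 / ((m:ℝ)+1) ≤ 1 := by
          rw [div_le_one hm1]; linarith
        linarith
      have hb := rpow_one_add_le_one_add_mul_self hs h0.le h1
      have hx : (1 : ℝ) + -1 / ((m:ℝ) + 1) = (m:ℝ) / ((m:ℝ)+1) := by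
        field_simp
        ring
      rw [hx] at hb
      have hmul : (m:ℝ) ^ δ = ((m:ℝ)+1) ^ δ * ((m:ℝ)/((m:ℝ)+1)) ^ δ := by
        rw [← Real.mul_rpow (by positivity) (by positivity)]
        congr 1
        field_simp
      have h1r : (1:ℝ) ≤ ((m:ℝ)+1) ^ δ := by
        calc (1:ℝ) = 1 ^ δ := (Real.one_rpow δ).symm
        _ ≤ ((m:ℝ)+1) ^ δ := Real.rpow_le_rpow (by norm_num) (by linarith) h0.le
      calc (m:ℝ) ^ δ = ((m:ℝ)+1) ^ δ * ((m:ℝ)/((m:ℝ)+1)) ^ δ := hmul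
      _ ≤ ((m:ℝ)+1) ^ δ * (1 + δ * (-1 / ((m:ℝ)+1))) := by
          apply mul_le_mul_of_nonneg_left hb (by positivity)
      _ = ((m:ℝ)+1) ^ δ - ((m:ℝ)+1) ^ δ * (δ / ((m:ℝ)+1)) := by ring
      _ ≤ ((m:ℝ)+1) ^ δ - δ / ((m:ℝ)+1) := by
          have hd : 0 ≤ δ / ((m:ℝ)+1) := by positivity
          nlinarith
    have kd : (m:ℝ)^δ/δ + 1/((m:ℝ)+1) ≤ ((m:ℝ)+1)^δ/δ := by
      have h2 : (m:ℝ)^δ + δ/((m:ℝ)+1) ≤ ((m:ℝ)+1)^δ := by linarith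
      calc (m:ℝ)^δ/δ + 1/((m:ℝ)+1) = ((m:ℝ)^δ + δ/((m:ℝ)+1))/δ := by
            field_simp
      _ ≤ ((m:ℝ)+1)^δ/δ := by gcongr
    push_cast
    linarith

lemma phi_lower (n n₁ n₂ n₃ : ℤ) (h1 : n₁ - n₂ + n₃ = n) :
    2 * ((n₁ - n) * (n₃ - n)) ^ 2 ≤ |n ^ 4 - n₁ ^ 4 + n₂ ^ 4 - n₃ ^ 4| := by
  set a := n₁ - n with ha
  set b := n₃ - n with hb
  have hn₂ : n₂ = n + a + b := by omega
  have hid : n ^ 4 - n₁ ^ 4 + n₂ ^ 4 - n₃ ^ 4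
      = a * b * (3 * (2 * n + a + b) ^ 2 + a ^ 2 + b ^ 2) := by
    rw [hn₂, ha, hb]; ring
  rw [hid, abs_mul, abs_of_nonneg (by positivity : (0:ℤ) ≤ 3 * (2 * n + a + b) ^ 2 + a ^ 2 + b ^ 2)]
  have e3 : 2 * |a * b| ≤ a ^ 2 + b ^ 2 := by
    rw [abs_mul]
    calc 2 * (|a| * |b|) = 2 * |a| * |b| := by ring
    _ ≤ |a| ^ 2 + |b| ^ 2 := two_mul_le_add_sq _ _
    _ = a ^ 2 + b ^ 2 := by rw [sq_abs, sq_abs]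
  calc 2 * (a * b) ^ 2 = |a * b| * (2 * |a * b|) := by
        rw [← sq_abs (a * b)]; ring
  _ ≤ |a * b| * (a ^ 2 + b ^ 2) := mul_le_mul_of_nonneg_left e3 (abs_nonneg _)
  _ ≤ |a * b| * (3 * (2 * n + a + b) ^ 2 + a ^ 2 + b ^ 2) := by
      have := sq_nonneg (2 * n + a + b)
      nlinarith [abs_nonneg (a * b)]

/-- Counting estimate: the resonant set
`A_N(n) = {(n₁,n₂,n₃) ∈ ℤ³ : n₁ − n₂ + n₃ = n, n₁ ≠ n ≠ n₃, |Φ₄(n,n₁,n₂,n₃)| ≤ N}`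
has cardinality `O(N^{1/2+ε})`. -/
theorem resonant_set_card (ε : ℝ) (hε : 0 < ε) :
    ∃ C : ℝ, 0 < C ∧
      ∀ (N : ℝ), 1 ≤ N → ∀ n : ℤ,
        ({(n₁, n₂, n₃) : ℤ × ℤ × ℤ |
            n₁ - n₂ + n₃ = n ∧ n₁ ≠ n ∧ n₃ ≠ n ∧
            (|n ^ 4 - n₁ ^ 4 + n₂ ^ 4 - n₃ ^ 4| : ℝ) ≤ N}).Finite ∧
        (({(n₁, n₂, n₃) : ℤ × ℤ × ℤ |
            n₁ - n₂ + n₃ = n ∧ n₁ ≠ n ∧ n₃ ≠ n ∧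
            (|n ^ 4 - n₁ ^ 4 + n₂ ^ 4 - n₃ ^ 4| : ℝ) ≤ N}).ncard : ℝ) ≤
          C * N ^ (1 / 2 + ε) := by
  set δ := min ε 1 with hδ
  have hδ0 : 0 < δ := lt_min hε one_pos
  have hδ1 : δ ≤ 1 := min_le_right _ _
  have hδε : δ ≤ ε := min_le_left _ _
  refine ⟨6 / δ, by positivity, fun N hN n => ?_⟩
  have hN0 : (0:ℝ) < N := lt_of_lt_of_le one_pos hN
  set S : Set (ℤ × ℤ × ℤ) := {(n₁, n₂, n₃) : ℤ × ℤ × ℤ |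
      n₁ - n₂ + n₃ = n ∧ n₁ ≠ n ∧ n₃ ≠ n ∧
      (|n ^ 4 - n₁ ^ 4 + n₂ ^ 4 - n₃ ^ 4| : ℝ) ≤ N} with hS
  set m : ℕ := ⌊Real.sqrt N⌋₊ with hm
  set f : ℤ × ℤ × ℤ → ℤ × ℤ := fun x => (x.1 - n, x.2.2 - n) with hf
  set G : Finset (ℤ × ℤ) := (Finset.Icc 1 m).biUnion
    (fun a => ({(a : ℤ), -(a : ℤ)} : Finset ℤ) ×ˢ
      Finset.Icc (-((m / a : ℕ) : ℤ)) ((m / a : ℕ) : ℤ)) with hG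
  -- membership
  have hmem : ∀ x ∈ S, f x ∈ G := by
    rintro ⟨n₁, n₂, n₃⟩ hx
    obtain ⟨h1, h2, h3, h4⟩ : n₁ - n₂ + n₃ = n ∧ n₁ ≠ n ∧ n₃ ≠ n ∧
        (|(n:ℝ) ^ 4 - (n₁:ℝ) ^ 4 + (n₂:ℝ) ^ 4 - (n₃:ℝ) ^ 4|) ≤ N := hx
    set a := n₁ - n with ha
    set b := n₃ - n with hb
    have ha0 : a ≠ 0 := sub_ne_zero.mpr h2
    have hb0 : b ≠ 0 := sub_ne_zero.mpr h3
    have hZ : 2 * ((a * b : ℤ) : ℝ) ^ 2 ≤ N := by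
      have := phi_lower n n₁ n₂ n₃ h1
      have hcast : ((|n ^ 4 - n₁ ^ 4 + n₂ ^ 4 - n₃ ^ 4| : ℤ) : ℝ)
          = |(n:ℝ) ^ 4 - (n₁:ℝ) ^ 4 + (n₂:ℝ) ^ 4 - (n₃:ℝ) ^ 4| := by
        push_cast [Int.cast_abs]; ring_nf
      have h5 : ((2 * ((n₁ - n) * (n₃ - n)) ^ 2 : ℤ) : ℝ) ≤ N := by
        calc ((2 * ((n₁ - n) * (n₃ - n)) ^ 2 : ℤ) : ℝ)
            ≤ ((|n ^ 4 - n₁ ^ 4 + n₂ ^ 4 - n₃ ^ 4| : ℤ) : ℝ) := by exact_mod_cast this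
        _ = _ := hcast
        _ ≤ N := h4
      calc 2 * ((a * b : ℤ) : ℝ) ^ 2
          = ((2 * ((n₁ - n) * (n₃ - n)) ^ 2 : ℤ) : ℝ) := by
            rw [ha, hb]; push_cast; ring
      _ ≤ N := h5
    have habm : (a * b).natAbs ≤ m := by
      rw [hm]
      apply Nat.le_floor
      have h6 : |((a * b : ℤ) : ℝ)| ≤ Real.sqrt N := by
        apply Real.abs_le_sqrt
        nlinarith [sq_nonneg ((a*b : ℤ) : ℝ)]
      calc (((a * b).natAbs : ℕ) : ℝ) = |((a * b : ℤ) : ℝ)| := by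
            rw [Nat.cast_natAbs, Int.cast_abs]
      _ ≤ Real.sqrt N := h6
    have haA : 1 ≤ a.natAbs := Int.natAbs_pos.mpr ha0
    have hbA : 1 ≤ b.natAbs := Int.natAbs_pos.mpr hb0
    have habA : a.natAbs * b.natAbs ≤ m := by rw [← Int.natAbs_mul]; exact habm
    have haM : a.natAbs ≤ m := le_trans (Nat.le_mul_of_pos_right _ (by omega)) habA
    rw [hG, Finset.mem_biUnion]
    refine ⟨a.natAbs, Finset.mem_Icc.mpr ⟨haA, haM⟩, ?_⟩
    rw [Finset.mem_product]
    constructor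
    · have := Int.natAbs_eq a
      simp only [Finset.mem_insert, Finset.mem_singleton]
      rcases this with h | h
      · left; exact h
      · right; exact h
    · rw [Finset.mem_Icc]
      have hbdiv : b.natAbs ≤ m / a.natAbs := by
        rw [Nat.le_div_iff_mul_le (by omega)]
        rw [mul_comm]; exact habA
      have : |b| ≤ ((m / a.natAbs : ℕ) : ℤ) := by
        rw [Int.abs_eq_natAbs]; exact_mod_cast hbdiv
      exact abs_le.mp this
  -- injectivity
  have hinj : Set.InjOn f S := by
    rintro ⟨x1, x2, x3⟩ hx ⟨y1, y2, y3⟩ hy hxy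
    obtain ⟨hx1, -, -, -⟩ : x1 - x2 + x3 = n ∧ _ ∧ _ ∧ _ := hx
    obtain ⟨hy1, -, -, -⟩ : y1 - y2 + y3 = n ∧ _ ∧ _ ∧ _ := hy
    simp only [hf, Prod.mk.injEq] at hxy
    obtain ⟨e1, e3⟩ := hxy
    have : x1 = y1 := by omega
    have : x3 = y3 := by omega
    simp_all
    omega
  have himg : f '' S ⊆ ↑G := by
    rintro p ⟨x, hx, rfl⟩; exact hmem x hx
  have hfin : S.Finite := Set.Finite.of_finite_image (G.finite_toSet.subset himg) hinj
  refine ⟨hfin, ?_⟩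
  -- cardinality chain
  have hcard1 : S.ncard ≤ G.card := by
    calc S.ncard = (f '' S).ncard := (Set.ncard_image_of_injOn hinj).symm
    _ ≤ (↑G : Set (ℤ × ℤ)).ncard := Set.ncard_le_ncard himg G.finite_toSet
    _ = G.card := Set.ncard_coe_finset G
  have hcard2 : G.card ≤ ∑ a ∈ Finset.Icc 1 m, 6 * (m / a) := by
    calc G.card ≤ ∑ a ∈ Finset.Icc 1 m,
        (({(a : ℤ), -(a : ℤ)} : Finset ℤ) ×ˢ
          Finset.Icc (-((m / a : ℕ) : ℤ)) ((m / a : ℕ) : ℤ)).card :=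
      Finset.card_biUnion_le
    _ ≤ ∑ a ∈ Finset.Icc 1 m, 6 * (m / a) := by
        apply Finset.sum_le_sum
        intro a haa
        rw [Finset.mem_Icc] at haa
        have hdiv1 : 1 ≤ m / a := (Nat.one_le_div_iff (by omega)).mpr haa.2
        rw [Finset.card_product]
        have c1 : ({(a : ℤ), -(a : ℤ)} : Finset ℤ).card ≤ 2 :=
          le_trans (Finset.card_insert_le _ _) (by simp)
        have c2 : (Finset.Icc (-((m / a : ℕ) : ℤ)) ((m / a : ℕ) : ℤ)).card = 2 * (m / a) + 1 := by
          rw [Int.card_Icc]; omega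
        calc ({(a : ℤ), -(a : ℤ)} : Finset ℤ).card *
            (Finset.Icc (-((m / a : ℕ) : ℤ)) ((m / a : ℕ) : ℤ)).card
            ≤ 2 * (2 * (m / a) + 1) := by rw [c2]; exact Nat.mul_le_mul_right _ c1
        _ ≤ 6 * (m / a) := by omega
  have hcard3 : ((∑ a ∈ Finset.Icc 1 m, 6 * (m / a) : ℕ) : ℝ)
      ≤ 6 * (m : ℝ) * ((m : ℝ) ^ δ / δ) := by
    push_cast
    calc ∑ a ∈ Finset.Icc 1 m, (6 : ℝ) * ((m / a : ℕ) : ℝ)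
        ≤ ∑ a ∈ Finset.Icc 1 m, 6 * ((m : ℝ) * (1 / (a : ℝ))) := by
          apply Finset.sum_le_sum
          intro a haa
          rw [Finset.mem_Icc] at haa
          have := Nat.cast_div_le (m := m) (n := a) (α := ℝ)
          have h7 : ((m / a : ℕ) : ℝ) ≤ (m : ℝ) / (a : ℝ) := this
          have h8 : (m : ℝ) / (a : ℝ) = (m : ℝ) * (1 / (a : ℝ)) := by ring
          linarith
    _ = 6 * (m : ℝ) * ∑ a ∈ Finset.Icc 1 m, (1 : ℝ) / a := by
          rw [Finset.mul_sum]; congr 1; ext a; ring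
    _ ≤ 6 * (m : ℝ) * ((m : ℝ) ^ δ / δ) := by
          apply mul_le_mul_of_nonneg_left (harm_sum hδ0 hδ1 m) (by positivity)
  have hmN : (m : ℝ) ≤ N ^ ((1:ℝ)/2) := by
    calc (m : ℝ) ≤ Real.sqrt N := Nat.floor_le (Real.sqrt_nonneg N)
    _ = N ^ ((1:ℝ)/2) := Real.sqrt_eq_rpow N
  have hmδ : (m : ℝ) ^ δ ≤ N ^ ((1:ℝ)/2 * δ) := by
    calc (m : ℝ) ^ δ ≤ (N ^ ((1:ℝ)/2)) ^ δ :=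
          Real.rpow_le_rpow (Nat.cast_nonneg m) hmN hδ0.le
    _ = N ^ ((1:ℝ)/2 * δ) := (Real.rpow_mul hN0.le _ _).symm
  calc ((S.ncard : ℕ) : ℝ) ≤ ((G.card : ℕ) : ℝ) := by exact_mod_cast hcard1
  _ ≤ ((∑ a ∈ Finset.Icc 1 m, 6 * (m / a) : ℕ) : ℝ) := by exact_mod_cast hcard2
  _ ≤ 6 * (m : ℝ) * ((m : ℝ) ^ δ / δ) := hcard3
  _ = (6 / δ) * ((m : ℝ) * (m : ℝ) ^ δ) := by ring
  _ ≤ (6 / δ) * (N ^ ((1:ℝ)/2) * N ^ ((1:ℝ)/2 * δ)) := by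
      apply mul_le_mul_of_nonneg_left _ (by positivity)
      exact mul_le_mul hmN hmδ (Real.rpow_nonneg (Nat.cast_nonneg m) δ)
        (Real.rpow_nonneg hN0.le _)
  _ = (6 / δ) * N ^ ((1:ℝ)/2 + (1:ℝ)/2 * δ) := by rw [← Real.rpow_add hN0]
  _ ≤ (6 / δ) * N ^ (1 / 2 + ε) := by
      apply mul_le_mul_of_nonneg_left _ (by positivity)
      exact Real.rpow_le_rpow_of_exponent_le hN (by linarith)
end
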